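/- Let λ be a multipartition of n, μ a multipartition of m ≤ n that arises as a 'cut part' of λ, and γ the corresponding 'remaining part' (a partition). If u and v are standard γ-tableaux, then there exist standard λ-tableaux u̇ and v̇ such that applying the shift-embedding θ̂_{i_μ} to the affine element ψ̂_{uv} and multiplying by y_μ yields the cyclotomic basis element: θ̂_{i_μ}(ψ̂_{uv}) · y_μ = ψ_{u̇ v̇} in R^Λ_n. -/

import Mathlib

namespace Paper

/-! ## The Khovanov–Lauda–Rouquier (quiver Hecke) algebra of type `Γ_e` over ℤ -/

/-- generators of the KLR algebra `R_n` of type `Γ_e`: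
idempotents `e(i)` for `i ∈ I^n` (`I = ℤ/eℤ`), dots `y_1,…,y_n` and
crossings `ψ_1,…,ψ_{n-1}`. -/
inductive Gen (e n : ℕ) : Type
  | idem : (Fin n → ZMod e) → Gen e n
  | dot : Fin n → Gen e n
  | cross : Fin (n - 1) → Gen e n

/-- the free algebra on the KLR generators. -/
abbrev F (e n : ℕ) := FreeAlgebra ℤ (Gen e n)

def fe {e n : ℕ} (i : Fin n → ZMod e) : F e n := FreeAlgebra.ι ℤ (Gen.idem i)
def fy {e n : ℕ} (r : Fin n) : F e n := FreeAlgebra.ι ℤ (Gen.dot r)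
def fpsi {e n : ℕ} (r : Fin (n - 1)) : F e n := FreeAlgebra.ι ℤ (Gen.cross r)

/-- the index `r` of `ψ_r` as an element of `{1,…,n}` (0-based: position `r`). -/
def lo {n : ℕ} (r : Fin (n - 1)) : Fin n := ⟨r.1, by have := r.2; omega⟩
/-- the index `r+1`. -/
def hi {n : ℕ} (r : Fin (n - 1)) : Fin n := ⟨r.1 + 1, by have := r.2; omega⟩

/-- the action of the simple transposition `s_r` on a residue sequence. -/
def swapIdx {e n : ℕ} (r : Fin (n - 1)) (i : Fin n → ZMod e) : Fin n → ZMod e :=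
  i ∘ Equiv.swap (lo r) (hi r)

/-- the defining relations of the KLR algebra of type `Γ_e`
(Khovanov–Lauda, Rouquier).  The relation `∑_{i ∈ I^n} e(i) = 1` is imposed whenever
`I^n` is a finite set (i.e. `e ≠ 0`), via an arbitrary finset containing all of `I^n`. -/
inductive Rel (e n : ℕ) : F e n → F e n → Prop
  | idem_mul (i j : Fin n → ZMod e) :
      Rel e n (fe i * fe j) (if i = j then fe i else 0)
  | idem_sum (S : Finset (Fin n → ZMod e)) (hS : ∀ i, i ∈ S) :
      Rel e n (∑ i ∈ S, fe i) 1
  | dot_idem (k : Fin n) (i : Fin n → ZMod e) :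
      Rel e n (fy k * fe i) (fe i * fy k)
  | cross_idem (r : Fin (n - 1)) (i : Fin n → ZMod e) :
      Rel e n (fpsi r * fe i) (fe (swapIdx r i) * fpsi r)
  | dot_dot (k m : Fin n) : Rel e n (fy k * fy m) (fy m * fy k)
  | cross_dot (r : Fin (n - 1)) (k : Fin n) (h1 : k ≠ lo r) (h2 : k ≠ hi r) :
      Rel e n (fpsi r * fy k) (fy k * fpsi r)
  | cross_cross (r t : Fin (n - 1)) (h : r.1 + 1 < t.1 ∨ t.1 + 1 < r.1) :
      Rel e n (fpsi r * fpsi t) (fpsi t * fpsi r)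
  | cross_dot_hi (r : Fin (n - 1)) (i : Fin n → ZMod e) :
      Rel e n (fpsi r * fy (hi r) * fe i)
        ((fy (lo r) * fpsi r + if i (lo r) = i (hi r) then 1 else 0) * fe i)
  | dot_cross (r : Fin (n - 1)) (i : Fin n → ZMod e) :
      Rel e n (fy (hi r) * fpsi r * fe i)
        ((fpsi r * fy (lo r) + if i (lo r) = i (hi r) then 1 else 0) * fe i)
  | cross_sq_eq (r : Fin (n - 1)) (i : Fin n → ZMod e) (h : i (lo r) = i (hi r)) :
      Rel e n (fpsi r * fpsi r * fe i) 0
  | cross_sq_far (r : Fin (n - 1)) (i : Fin n → ZMod e) (h1 : i (lo r) ≠ i (hi r))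
      (h2 : i (hi r) ≠ i (lo r) + 1) (h3 : i (hi r) ≠ i (lo r) - 1) :
      Rel e n (fpsi r * fpsi r * fe i) (fe i)
  | cross_sq_up (r : Fin (n - 1)) (i : Fin n → ZMod e) (he : e ≠ 2)
      (h : i (hi r) = i (lo r) + 1) :
      Rel e n (fpsi r * fpsi r * fe i) ((fy (hi r) - fy (lo r)) * fe i)
  | cross_sq_down (r : Fin (n - 1)) (i : Fin n → ZMod e) (he : e ≠ 2)
      (h : i (hi r) = i (lo r) - 1) :
      Rel e n (fpsi r * fpsi r * fe i) ((fy (lo r) - fy (hi r)) * fe i)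
  | cross_sq_two (r : Fin (n - 1)) (i : Fin n → ZMod e) (he : e = 2)
      (h : i (hi r) = i (lo r) + 1) :
      Rel e n (fpsi r * fpsi r * fe i)
        ((fy (hi r) - fy (lo r)) * (fy (lo r) - fy (hi r)) * fe i)
  | braid_other (r t : Fin (n - 1)) (ht : t.1 = r.1 + 1) (i : Fin n → ZMod e)
      (h : ¬ (i (hi t) = i (lo r) ∧ (i (hi r) = i (lo r) + 1 ∨ i (hi r) = i (lo r) - 1))) :
      Rel e n (fpsi r * fpsi t * fpsi r * fe i) (fpsi t * fpsi r * fpsi t * fe i)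
  | braid_plus (r t : Fin (n - 1)) (ht : t.1 = r.1 + 1) (i : Fin n → ZMod e)
      (he : e ≠ 2) (h1 : i (hi t) = i (lo r)) (h2 : i (hi r) = i (lo r) + 1) :
      Rel e n (fpsi r * fpsi t * fpsi r * fe i) ((fpsi t * fpsi r * fpsi t + 1) * fe i)
  | braid_minus (r t : Fin (n - 1)) (ht : t.1 = r.1 + 1) (i : Fin n → ZMod e)
      (he : e ≠ 2) (h1 : i (hi t) = i (lo r)) (h2 : i (hi r) = i (lo r) - 1) :
      Rel e n (fpsi r * fpsi t * fpsi r * fe i) ((fpsi t * fpsi r * fpsi t - 1) * fe i)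
  | braid_two (r t : Fin (n - 1)) (ht : t.1 = r.1 + 1) (i : Fin n → ZMod e)
      (he : e = 2) (h1 : i (hi t) = i (lo r)) (h2 : i (hi r) = i (lo r) + 1) :
      Rel e n (fpsi r * fpsi t * fpsi r * fe i)
        ((fpsi t * fpsi r * fpsi t + fy (lo r) - 2 * fy (hi r) + fy (hi t)) * fe i)

/-- the KLR (quiver Hecke) algebra `R_n` of type `Γ_e` over ℤ. -/
abbrev KLR (e n : ℕ) := RingQuot (Rel e n)

/-- the idempotent generator `e(i)` of `R_n`. -/
noncomputable def ae (e n : ℕ) (i : Fin n → ZMod e) : KLR e n :=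
  RingQuot.mkRingHom (Rel e n) (fe i)
/-- the dot generator `y_r` of `R_n` (0-based index: `ay e n ⟨r-1,_⟩` is `y_r`). -/
noncomputable def ay (e n : ℕ) (r : Fin n) : KLR e n :=
  RingQuot.mkRingHom (Rel e n) (fy r)
/-- the crossing generator `ψ_r` of `R_n` (0-based index). -/
noncomputable def apsi (e n : ℕ) (r : Fin (n - 1)) : KLR e n :=
  RingQuot.mkRingHom (Rel e n) (fpsi r)

end Paper
namespace Paper

/-- the cyclotomic relations: `e(i) y_1^{(Λ,α_{i_1})} = 0`, where the dominant weight `Λ`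
is recorded as the finitely supported function `I → ℕ`, `i ↦ (Λ, α_i)`. -/
inductive CRel (e n : ℕ) (Λ : ZMod e →₀ ℕ) : KLR e n → KLR e n → Prop
  | cyc (i : Fin n → ZMod e) (h : 0 < n) :
      CRel e n Λ (ae e n i * ay e n (⟨0, h⟩ : Fin n) ^ Λ (i ⟨0, h⟩)) 0

/-- the cyclotomic KLR algebra `R_n^Λ` of type `Γ_e` over ℤ. -/
abbrev CKLR (e n : ℕ) (Λ : ZMod e →₀ ℕ) := RingQuot (CRel e n Λ)

noncomputable def ce (e n : ℕ) (Λ : ZMod e →₀ ℕ) (i : Fin n → ZMod e) : CKLR e n Λ :=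
  RingQuot.mkRingHom (CRel e n Λ) (ae e n i)
noncomputable def cy (e n : ℕ) (Λ : ZMod e →₀ ℕ) (r : Fin n) : CKLR e n Λ :=
  RingQuot.mkRingHom (CRel e n Λ) (ay e n r)
noncomputable def cpsi (e n : ℕ) (Λ : ZMod e →₀ ℕ) (r : Fin (n - 1)) : CKLR e n Λ :=
  RingQuot.mkRingHom (CRel e n Λ) (apsi e n r)

end Paper
noncomputable section
open scoped Classical
namespace Paper

/-! ## Multipartitions and tableaux

A node is a triple (component, row, column), all 0-based.  A multicomposition of level
`l` is a function `Fin l → ℕ → ℕ` (component ↦ row ↦ row length).  Tableaux take values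
in `{1,…,n}` (and `0` outside the diagram). -/

abbrev Node (l : ℕ) := Fin l × ℕ × ℕ

/-- the Young diagram of a multicomposition. -/
def diag (l : ℕ) (lam : Fin l → ℕ → ℕ) : Set (Node l) :=
  {x | x.2.2 < lam x.1 x.2.1}

/-- `lam` is a multipartition of `n` (of level `l`). -/
def IsMultipartition (l n : ℕ) (lam : Fin l → ℕ → ℕ) : Prop :=
  (∀ c : Fin l, Antitone (lam c)) ∧ (∀ (c : Fin l) (r : ℕ), lam c r ≠ 0 → r < n) ∧
    (∑ c : Fin l, ∑ r ∈ Finset.range n, lam c r) = n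

/-- the size of the `c`-th component of `lam` (whose rows are supported in `[0,n)`). -/
def compSize (l n : ℕ) (lam : Fin l → ℕ → ℕ) (c : Fin l) : ℕ :=
  ∑ r ∈ Finset.range n, lam c r

/-- a `lam`-tableau: a bijection from the diagram of `lam` onto `{1,…,n}`,
normalised to vanish off the diagram. -/
def IsTableau (l n : ℕ) (lam : Fin l → ℕ → ℕ) (T : Node l → ℕ) : Prop :=
  Set.BijOn T (diag l lam) (Set.Icc 1 n) ∧ ∀ x, x ∉ diag l lam → T x = 0

/-- entries increase along rows and down columns. -/
def RowColIncreasing (l : ℕ) (lam : Fin l → ℕ → ℕ) (T : Node l → ℕ) : Prop :=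
  (∀ (c : Fin l) (r j : ℕ), j + 1 < lam c r → T (c, r, j) < T (c, r, j + 1)) ∧
  (∀ (c : Fin l) (r j : ℕ), j < lam c (r + 1) → T (c, r, j) < T (c, r + 1, j))

/-- `T` is a standard `lam`-tableau (in particular `lam` is a multipartition of `n`). -/
def IsStdTab (l n : ℕ) (lam : Fin l → ℕ → ℕ) (T : Node l → ℕ) : Prop :=
  IsMultipartition l n lam ∧ IsTableau l n lam T ∧ RowColIncreasing l lam T

/-- the initial tableau `t^λ`, filling `1,2,…,n` along the rows of the first component,
then the second component, and so on; it is the unique dominance-greatest standard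
`λ`-tableau. -/
def initTab (l n : ℕ) (lam : Fin l → ℕ → ℕ) : Node l → ℕ := fun x =>
  if x.2.2 < lam x.1 x.2.1 then
    (∑ c ∈ Finset.univ.filter (fun c : Fin l => c < x.1), compSize l n lam c) +
      (∑ r ∈ Finset.range x.2.1, lam x.1 r) + x.2.2 + 1
  else 0

/-- the shape of `T|_k`, the subtableau of entries `≤ k`. -/
def restShape (l : ℕ) (lam : Fin l → ℕ → ℕ) (T : Node l → ℕ) (k : ℕ) :
    Fin l → ℕ → ℕ :=
  fun c r => ((Finset.range (lam c r)).filter fun j => T (c, r, j) ≤ k).card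

/-- the partial sum `∑_{c' < c} |λ^{(c')}| + ∑_{r < k} λ^{(c)}_r` used to define
the dominance order. -/
def partialSum (l n : ℕ) (lam : Fin l → ℕ → ℕ) (c : Fin l) (k : ℕ) : ℕ :=
  (∑ c' ∈ Finset.univ.filter (fun c' : Fin l => c' < c), compSize l n lam c') +
    ∑ r ∈ Finset.range k, lam c r

/-- the dominance order `lam ⊵ mu` on multicompositions of the same level. -/
def ShapeDom (l n : ℕ) (lam mu : Fin l → ℕ → ℕ) : Prop :=
  ∀ (c : Fin l) (k : ℕ), partialSum l n mu c k ≤ partialSum l n lam c k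

/-- the dominance order `S ⊵ T` on `λ`-tableaux: `Shape(S|_k) ⊵ Shape(T|_k)` for all `k`. -/
def TabDom (l n : ℕ) (lam : Fin l → ℕ → ℕ) (S T : Node l → ℕ) : Prop :=
  ∀ k : ℕ, ShapeDom l n (restShape l lam S k) (restShape l lam T k)

/-- the adjacent transposition `s_r = (r, r+1)` on entries. -/
def sw (r : ℕ) : Equiv.Perm ℕ := Equiv.swap r (r + 1)

/-- the (right) action of a permutation of the entries on a tableau:
`(T·w)(x) = (T x)·w`. -/
def actT (l : ℕ) (T : Node l → ℕ) (w : Equiv.Perm ℕ) : Node l → ℕ := fun x => w (T x)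

/-- the action of a word `s_{r_1} s_{r_2} ⋯ s_{r_m}` (leftmost letter acting first). -/
def actWord (l : ℕ) (T : Node l → ℕ) (L : List ℕ) : Node l → ℕ :=
  L.foldl (fun U r => actT l U (sw r)) T

/-! ### The standard expression of `d(t)`

For a standard `λ`-tableau `t` let `t^{(i)}` be the tableau agreeing with `t` on the
entries `≥ i` and equal to the initial tableau of its shape on the entries `< i`;
then `t^{(i+1)} w_i = t^{(i)}` with `w_i = s_{a_i} s_{a_i + 1} ⋯ s_{i-1}` (or `w_i = 1`),
where `a_i` is the entry of `t^{(i+1)}` at the node of `t` containing `i`, and the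
standard expression of `d(t)` is the concatenated word `w_n w_{n-1} ⋯ w_1`. -/

/-- the interpolating tableau `t^{(i)}`. -/
def interT (l n : ℕ) (lam : Fin l → ℕ → ℕ) (T : Node l → ℕ) (i : ℕ) : Node l → ℕ :=
  fun x => if i ≤ T x then T x else initTab l n (restShape l lam T (i - 1)) x

/-- the entry `a_i` of `t^{(i+1)}` at the node of `t` containing `i`
(junk value `i`, giving the empty word, if there is no such node). -/
def aEntry (l n : ℕ) (lam : Fin l → ℕ → ℕ) (T : Node l → ℕ) (i : ℕ) : ℕ :=
  if h : ∃ x, x ∈ diag l lam ∧ T x = i then interT l n lam T (i + 1) h.choose else i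

/-- the word `[a_i, a_i + 1, …, i-1]` of `w_i`. -/
def wordAt (l n : ℕ) (lam : Fin l → ℕ → ℕ) (T : Node l → ℕ) (i : ℕ) : List ℕ :=
  List.range' (aEntry l n lam T i) (i - aEntry l n lam T i)

/-- the standard expression of `d(t)`, as the word `w_n w_{n-1} ⋯ w_1` read left to
right (leftmost letter first). -/
def stdWord (l n : ℕ) (lam : Fin l → ℕ → ℕ) (T : Node l → ℕ) : List ℕ :=
  ((List.range (n + 1)).reverse.map (wordAt l n lam T)).flatten

end Paper
end
noncomputable section
open scoped Classical
namespace Paper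

/-! ## Residues, addable nodes and the elements `e_λ`, `y_λ`, `ψ_{st}` -/

/-- the residue of a node: `res (r, c, m) = r - c + κ_m ∈ I = ℤ/eℤ`
(for the multicharge `κ`). -/
def res (e : ℕ) {l : ℕ} (κ : Fin l → ZMod e) (x : Node l) : ZMod e :=
  (x.2.1 : ZMod e) - (x.2.2 : ZMod e) + κ x.1

/-- the residue `res_T(k)` of the node of the tableau `T` containing the entry `k`. -/
def resAt (e : ℕ) {l : ℕ} (κ : Fin l → ZMod e) (lam : Fin l → ℕ → ℕ)
    (T : Node l → ℕ) (k : ℕ) : ZMod e :=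
  if h : ∃ x, x ∈ diag l lam ∧ T x = k then res e κ h.choose else 0

/-- the residue sequence `i_T = (res_T(1), …, res_T(n)) ∈ I^n` of a tableau. -/
def resSeqT (e n : ℕ) {l : ℕ} (κ : Fin l → ZMod e) (lam : Fin l → ℕ → ℕ)
    (T : Node l → ℕ) : Fin n → ZMod e :=
  fun k => resAt e κ lam T (k.1 + 1)

/-- `x` is an addable node of the multipartition `lam`. -/
def IsAddable {l : ℕ} (lam : Fin l → ℕ → ℕ) (x : Node l) : Prop :=
  x.2.2 = lam x.1 x.2.1 ∧ (x.2.1 = 0 ∨ lam x.1 x.2.1 < lam x.1 (x.2.1 - 1))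

/-- `x` is below `y`: in a later component, or in the same component and a later row. -/
def Below {l : ℕ} (x y : Node l) : Prop :=
  y.1 < x.1 ∨ (y.1 = x.1 ∧ y.2.1 < x.2.1)

/-- `A^Λ_T(k)`: the addable nodes of `Shape(T|_k)` which lie below the node of `T`
containing `k` and have the same residue as it. -/
def addSet (e : ℕ) {l : ℕ} (κ : Fin l → ZMod e) (lam : Fin l → ℕ → ℕ)
    (T : Node l → ℕ) (k : ℕ) : Set (Node l) :=
  {x | IsAddable (restShape l lam T k) x ∧
    ∀ y : Node l, y ∈ diag l lam → T y = k → (Below x y ∧ res e κ x = res e κ y)}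

/-- `|A^Λ_T(k)|`. -/
def addCount (e : ℕ) {l : ℕ} (κ : Fin l → ZMod e) (lam : Fin l → ℕ → ℕ)
    (T : Node l → ℕ) (k : ℕ) : ℕ :=
  (addSet e κ lam T k).ncard

/-- the element `y_μ = ∏_{k=1}^{m} y_k^{|A^Λ_{t^μ}(k)|}` of `R^Λ_n`, for a
multipartition `μ` of `m ≤ n`. -/
def yEl (e n : ℕ) (Λ : ZMod e →₀ ℕ) {l : ℕ} (κ : Fin l → ZMod e)
    (lam : Fin l → ℕ → ℕ) (m : ℕ) : CKLR e n Λ :=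
  ((List.range m).map fun j =>
    if h : j < n then cy e n Λ ⟨j, h⟩ ^ addCount e κ lam (initTab l m lam) (j + 1)
    else 1).prod

/-- `ψ_r ∈ R^Λ_n` for a (1-based) index `1 ≤ r ≤ n-1` (and `1` for junk indices). -/
def cpsiOf (e n : ℕ) (Λ : ZMod e →₀ ℕ) (r : ℕ) : CKLR e n Λ :=
  if h : 1 ≤ r ∧ r < n then cpsi e n Λ ⟨r - 1, by obtain ⟨h1, h2⟩ := h; omega⟩ else 1

/-- `ψ_w` for a word `w = s_{r_1} ⋯ s_{r_m}`. -/
def psiWord (e n : ℕ) (Λ : ZMod e →₀ ℕ) (L : List ℕ) : CKLR e n Λ :=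
  (L.map (cpsiOf e n Λ)).prod

/-- the graded cellular basis element
`ψ_{st} = ψ*_{d(s)} e_λ y_λ ψ_{d(t)} ∈ R^Λ_n`, where `d(s), d(t)` are taken with their
standard expressions and `e_λ = e(i_λ)` for the residue sequence `i_λ` of `t^λ`. -/
def psiST (e n : ℕ) (Λ : ZMod e →₀ ℕ) {l : ℕ} (κ : Fin l → ZMod e)
    (lam : Fin l → ℕ → ℕ) (S T : Node l → ℕ) : CKLR e n Λ :=
  psiWord e n Λ ((stdWord l n lam S).reverse) *
    ce e n Λ (resSeqT e n κ lam (initTab l n lam)) *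
    yEl e n Λ κ lam n *
    psiWord e n Λ (stdWord l n lam T)

end Paper
end
noncomputable section
open scoped Classical
namespace Paper

/-! ## Cutting a multipartition and the shift embedding `θ̂` -/

/-- the index of the last component. -/
def lastC (l : ℕ) (h : 0 < l) : Fin l := ⟨l - 1, by omega⟩

/-- the cut `m` of `λ` associated to the cut row `a` (0-based: the first `a` rows of
the last component are kept): `m = ∑_{c < ℓ} |λ^{(c)}| + ∑_{r < a} λ^{(ℓ)}_r`. -/
def cutM (l n : ℕ) (h : 0 < l) (lam : Fin l → ℕ → ℕ) (a : ℕ) : ℕ :=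
  (∑ c ∈ Finset.univ.filter (fun c : Fin l => c < lastC l h), compSize l n lam c) +
    ∑ r ∈ Finset.range a, lam (lastC l h) r

/-- the cut part `μ = λ|_m`. -/
def muPart (l : ℕ) (h : 0 < l) (lam : Fin l → ℕ → ℕ) (a : ℕ) : Fin l → ℕ → ℕ :=
  fun c r => if c = lastC l h ∧ a ≤ r then 0 else lam c r

/-- the remaining part `γ` (a partition, viewed as a level-1 multipartition):
the rows `a, a+1, …` of the last component of `λ`. -/
def gamma1 (l : ℕ) (h : 0 < l) (lam : Fin l → ℕ → ℕ) (a : ℕ) : Fin 1 → ℕ → ℕ :=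
  fun _ r => lam (lastC l h) (a + r)

/-- the cut residue `s`: the residue of the node `(a+1, 1, ℓ)` (0-based: `(a,0)` in the
last component). -/
def cutRes (e l : ℕ) (h : 0 < l) (κ : Fin l → ZMod e) (a : ℕ) : ZMod e :=
  res e κ (lastC l h, a, 0)

/-- the level-1 multicharge of the cut weight `Λ' = Λ_s`. -/
def kappa1 (e l : ℕ) (h : 0 < l) (κ : Fin l → ZMod e) (a : ℕ) : Fin 1 → ZMod e :=
  fun _ => cutRes e l h κ a

/-- `ψ_r` in the free algebra on the KLR generators, 1-based index. -/
def fpsiOf (e n' : ℕ) (r : ℕ) : F e n' :=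
  if h : 1 ≤ r ∧ r < n' then fpsi ⟨r - 1, by obtain ⟨h1, h2⟩ := h; omega⟩ else 1

/-- `ψ_w` in the free algebra. -/
def fPsiWord (e n' : ℕ) (L : List ℕ) : F e n' := (L.map (fpsiOf e n')).prod

/-- `ŷ_γ` in the free algebra (for `γ` of size `m' ≤ n'` and multicharge `κ'`). -/
def fyEl (e n' : ℕ) {l : ℕ} (κ' : Fin l → ZMod e) (lam' : Fin l → ℕ → ℕ)
    (m' : ℕ) : F e n' :=
  ((List.range m').map fun j =>
    if h : j < n' then
      fy (e := e) (⟨j, h⟩ : Fin n') ^ addCount e κ' lam' (initTab l m' lam') (j + 1)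
    else 1).prod

/-- the canonical word representing `ψ̂_{uv} = ψ̂*_{d(u)} ê_γ ŷ_γ ψ̂_{d(v)}` in the free
algebra on the KLR generators of `R_{n'}`. -/
def fPsiHat (e n' : ℕ) {l : ℕ} (κ' : Fin l → ZMod e) (lam' : Fin l → ℕ → ℕ)
    (U V : Node l → ℕ) : F e n' :=
  fPsiWord e n' ((stdWord l n' lam' U).reverse) *
    fe (fun k : Fin n' => resAt e κ' lam' (initTab l n' lam') (k.1 + 1)) *
    fyEl e n' κ' lam' n' *
    fPsiWord e n' ((stdWord l n' lam' V))

/-- the shift embedding `θ̂_j : R_{n-m} → R^Λ_n` (as an algebra map on the free algebra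
on the generators of `R_{n-m}`): `e(i) ↦ e(j ∨ i)`, `y_r ↦ y_{r+m}`, `ψ_r ↦ ψ_{r+m}`. -/
def thetaFree (e n : ℕ) (Λ : ZMod e →₀ ℕ) (m : ℕ) (j : Fin m → ZMod e) :
    F e (n - m) →ₐ[ℤ] CKLR e n Λ :=
  FreeAlgebra.lift ℤ fun g =>
    match g with
    | Gen.idem i => ce e n Λ (fun x : Fin n =>
        if hx : x.1 < m then j ⟨x.1, hx⟩ else i ⟨x.1 - m, by have := x.2; omega⟩)
    | Gen.dot r => if hr : r.1 + m < n then cy e n Λ ⟨r.1 + m, hr⟩ else 1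
    | Gen.cross r => if hr : r.1 + m < n - 1 then cpsi e n Λ ⟨r.1 + m, hr⟩ else 1

end Paper
end

noncomputable section
open scoped Classical
namespace Paper
open Finset

/-! ### Generic sum lemmas -/

lemma sum_range_eq_of_support {f : ℕ → ℕ} {M A : ℕ} (hf : ∀ r, f r ≠ 0 → r < M)
    (hMA : M ≤ A) : ∑ r ∈ range A, f r = ∑ r ∈ range M, f r := by
  symm
  apply Finset.sum_subset (Finset.range_subset_range.2 hMA)
  intro x _ hx
  by_contra h
  exact hx (Finset.mem_range.2 (hf x h))

lemma sum_range_le_sum_range {f : ℕ → ℕ} {A B : ℕ} (h : A ≤ B) :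
    ∑ r ∈ range A, f r ≤ ∑ r ∈ range B, f r :=
  Finset.sum_le_sum_of_subset (Finset.range_subset_range.2 h)

lemma sum_range_le_of_support {f : ℕ → ℕ} {M : ℕ} (hf : ∀ r, f r ≠ 0 → r < M) (A : ℕ) :
    ∑ r ∈ range A, f r ≤ ∑ r ∈ range M, f r := by
  rcases le_or_gt A M with h | h
  · exact sum_range_le_sum_range h
  · exact le_of_eq (sum_range_eq_of_support hf h.le)

lemma exists_cut (f : ℕ → ℕ) (N k : ℕ) (h1 : 1 ≤ k) (h2 : k ≤ ∑ r ∈ range N, f r) :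
    ∃ r, r < N ∧ (∑ r' ∈ range r, f r') < k ∧ k ≤ (∑ r' ∈ range r, f r') + f r := by
  induction N with
  | zero => simp at h2; omega
  | succ N ih =>
    rcases le_or_gt k (∑ r ∈ range N, f r) with h | h
    · obtain ⟨r, h3, h4, h5⟩ := ih h
      exact ⟨r, by omega, h4, h5⟩
    · rw [Finset.sum_range_succ] at h2
      exact ⟨N, by omega, h, h2⟩

/-- the column sizes as a function on `ℕ`. -/
def csz (l n : ℕ) (lam : Fin l → ℕ → ℕ) : ℕ → ℕ :=
  fun i => if h : i < l then compSize l n lam ⟨i, h⟩ else 0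

lemma csz_eq {l n : ℕ} (lam : Fin l → ℕ → ℕ) (c : Fin l) :
    csz l n lam c.1 = compSize l n lam c := by
  simp [csz, c.2]

lemma sum_filter_lt {l : ℕ} (g : Fin l → ℕ) (c : Fin l) :
    ∑ c' ∈ Finset.univ.filter (fun c' : Fin l => c' < c), g c'
      = ∑ i ∈ range c.1, (if h : i < l then g ⟨i, h⟩ else 0) := by
  refine Finset.sum_bij' (fun (c' : Fin l) _ => c'.1)
    (fun i hi => (⟨i, lt_trans (Finset.mem_range.1 hi) c.2⟩ : Fin l)) ?_ ?_ ?_ ?_ ?_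
  · intro a ha
    simp only [Finset.mem_filter, Finset.mem_univ, true_and] at ha
    exact Finset.mem_range.2 ha
  · intro i hi
    simp only [Finset.mem_filter, Finset.mem_univ, true_and]
    exact Finset.mem_range.1 hi
  · intro a ha; rfl
  · intro i hi; rfl
  · intro a ha
    simp only [Finset.mem_filter, Finset.mem_univ, true_and] at ha
    have : a.1 < l := a.2
    simp [this]

lemma partialSum_eq {l n : ℕ} (lam : Fin l → ℕ → ℕ) (c : Fin l) (k : ℕ) :
    partialSum l n lam c k = (∑ i ∈ range c.1, csz l n lam i) + ∑ r ∈ range k, lam c r := by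
  unfold partialSum
  rw [sum_filter_lt]
  rfl

lemma csz_total {l n : ℕ} {lam : Fin l → ℕ → ℕ} (hlam : IsMultipartition l n lam) :
    ∑ i ∈ range l, csz l n lam i = n := by
  rw [← Fin.sum_univ_eq_sum_range (csz l n lam) l]
  have : ∀ c : Fin l, csz l n lam c.1 = compSize l n lam c := csz_eq lam
  calc ∑ c : Fin l, csz l n lam c.1 = ∑ c : Fin l, compSize l n lam c :=
        Finset.sum_congr rfl (fun c _ => this c)
    _ = n := hlam.2.2

end Paper
end

noncomputable section
open scoped Classical
namespace Paper
open Finset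

/-! ### Basic properties of the initial tableau -/

section InitTab

variable {l n : ℕ} {lam : Fin l → ℕ → ℕ}

lemma mem_diag_iff {x : Node l} : x ∈ diag l lam ↔ x.2.2 < lam x.1 x.2.1 := Iff.rfl

lemma initTab_apply_mem {x : Node l} (hx : x ∈ diag l lam) :
    initTab l n lam x = partialSum l n lam x.1 x.2.1 + x.2.2 + 1 := by
  have hx' : x.2.2 < lam x.1 x.2.1 := hx
  unfold initTab partialSum
  rw [if_pos hx']

lemma initTab_apply_not_mem {x : Node l} (hx : x ∉ diag l lam) :
    initTab l n lam x = 0 := by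
  have hx' : ¬ x.2.2 < lam x.1 x.2.1 := hx
  unfold initTab
  rw [if_neg hx']

lemma partialSum_succ (c : Fin l) (k : ℕ) :
    partialSum l n lam c (k + 1) = partialSum l n lam c k + lam c k := by
  unfold partialSum
  rw [Finset.sum_range_succ]
  omega

lemma partialSum_mono_row (c : Fin l) {k k' : ℕ} (h : k ≤ k') :
    partialSum l n lam c k ≤ partialSum l n lam c k' := by
  rw [partialSum_eq, partialSum_eq]
  exact Nat.add_le_add_left (sum_range_le_sum_range h) _

lemma partialSum_le_P_comp (hlam : IsMultipartition l n lam) (c : Fin l) (k : ℕ) :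
    partialSum l n lam c k ≤ (∑ i ∈ range c.1, csz l n lam i) + compSize l n lam c := by
  rw [partialSum_eq]
  exact Nat.add_le_add_left (sum_range_le_of_support (fun r h => hlam.2.1 c r h) k) _

lemma P_comp_le_P (c c' : Fin l) (h : c.1 < c'.1) :
    (∑ i ∈ range c.1, csz l n lam i) + compSize l n lam c
      ≤ ∑ i ∈ range c'.1, csz l n lam i := by
  have h1 : ∑ i ∈ range (c.1 + 1), csz l n lam i
      = (∑ i ∈ range c.1, csz l n lam i) + csz l n lam c.1 := Finset.sum_range_succ _ _
  rw [csz_eq] at h1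
  rw [← h1]
  exact sum_range_le_sum_range h

lemma P_comp_le_n (hlam : IsMultipartition l n lam) (c : Fin l) :
    (∑ i ∈ range c.1, csz l n lam i) + compSize l n lam c ≤ n := by
  have h1 : ∑ i ∈ range (c.1 + 1), csz l n lam i
      = (∑ i ∈ range c.1, csz l n lam i) + csz l n lam c.1 := Finset.sum_range_succ _ _
  rw [csz_eq] at h1
  have h2 : ∑ i ∈ range (c.1 + 1), csz l n lam i ≤ ∑ i ∈ range l, csz l n lam i :=
    sum_range_le_sum_range c.2
  rw [csz_total hlam] at h2
  omega

lemma P_le_partialSum (c : Fin l) (k : ℕ) :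
    (∑ i ∈ range c.1, csz l n lam i) ≤ partialSum l n lam c k := by
  rw [partialSum_eq]
  exact Nat.le_add_right _ _

lemma initTab_le_psucc {x : Node l} (hx : x ∈ diag l lam) :
    initTab l n lam x ≤ partialSum l n lam x.1 (x.2.1 + 1) := by
  rw [initTab_apply_mem hx, partialSum_succ]
  have hx' : x.2.2 < lam x.1 x.2.1 := hx
  omega

lemma initTab_le (hlam : IsMultipartition l n lam) {x : Node l} (hx : x ∈ diag l lam) :
    initTab l n lam x ≤ n :=
  le_trans (initTab_le_psucc hx) (le_trans (partialSum_le_P_comp hlam _ _) (P_comp_le_n hlam _))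

lemma initTab_pos {x : Node l} (hx : x ∈ diag l lam) : 1 ≤ initTab l n lam x := by
  rw [initTab_apply_mem hx]
  omega

lemma initTab_lt_of_below (hlam : IsMultipartition l n lam) {x x' : Node l}
    (hx : x ∈ diag l lam) (hx' : x' ∈ diag l lam)
    (h : x.1.1 < x'.1.1 ∨ (x.1 = x'.1 ∧ x.2.1 < x'.2.1)) :
    initTab l n lam x < initTab l n lam x' := by
  have h1 : initTab l n lam x ≤ partialSum l n lam x.1 (x.2.1 + 1) := initTab_le_psucc hx
  have h2 : partialSum l n lam x'.1 x'.2.1 + 1 ≤ initTab l n lam x' := by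
    rw [initTab_apply_mem hx']
    omega
  rcases h with h | ⟨hc, hr⟩
  · have h3 : partialSum l n lam x.1 (x.2.1 + 1)
        ≤ (∑ i ∈ range x.1.1, csz l n lam i) + compSize l n lam x.1 :=
      partialSum_le_P_comp hlam _ _
    have h4 := P_comp_le_P (lam := lam) (n := n) x.1 x'.1 h
    have h5 := P_le_partialSum (lam := lam) (n := n) x'.1 x'.2.1
    omega
  · rw [hc] at h1
    have h3 : partialSum l n lam x'.1 (x.2.1 + 1) ≤ partialSum l n lam x'.1 x'.2.1 :=
      partialSum_mono_row _ hr
    omega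

lemma initTab_injOn (hlam : IsMultipartition l n lam) :
    Set.InjOn (initTab l n lam) (diag l lam) := by
  intro x hx y hy he
  rcases Nat.lt_trichotomy x.1.1 y.1.1 with h | h | h
  · have := initTab_lt_of_below hlam hx hy (Or.inl h); omega
  · have hc : x.1 = y.1 := Fin.ext h
    rcases Nat.lt_trichotomy x.2.1 y.2.1 with h' | h' | h'
    · have := initTab_lt_of_below hlam hx hy (Or.inr ⟨hc, h'⟩); omega
    · have hv : x.2.2 = y.2.2 := by
        rw [initTab_apply_mem hx, initTab_apply_mem hy, hc, h'] at he
        omega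
      obtain ⟨cx, rx, jx⟩ := x
      obtain ⟨cy, ry, jy⟩ := y
      simp only at hc h' hv
      rw [hc, h', hv]
    · have := initTab_lt_of_below hlam hy hx (Or.inr ⟨hc.symm, h'⟩); omega
  · have := initTab_lt_of_below hlam hy hx (Or.inl h); omega

lemma initTab_surjOn (hlam : IsMultipartition l n lam) :
    Set.SurjOn (initTab l n lam) (diag l lam) (Set.Icc 1 n) := by
  intro k hk
  obtain ⟨hk1, hk2⟩ := Set.mem_Icc.1 hk
  obtain ⟨i, hil, h4, h5⟩ := exists_cut (csz l n lam) l k hk1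
    (by rw [csz_total hlam]; exact hk2)
  set c : Fin l := ⟨i, hil⟩ with hc
  have hcsz : csz l n lam i = compSize l n lam c := by simp [csz, hil, hc]
  rw [hcsz] at h5
  obtain ⟨r, hrn, h6, h7⟩ := exists_cut (lam c) n (k - ∑ r' ∈ range i, csz l n lam r')
    (by omega) (by unfold compSize at h5; omega)
  refine ⟨(c, r, k - (∑ r' ∈ range i, csz l n lam r') - (∑ r' ∈ range r, lam c r') - 1),
    ?_, ?_⟩
  · have : k - (∑ r' ∈ range i, csz l n lam r') - (∑ r' ∈ range r, lam c r') - 1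
        < lam c r := by omega
    exact this
  · have hmem : ((c, r, k - (∑ r' ∈ range i, csz l n lam r')
        - (∑ r' ∈ range r, lam c r') - 1) : Node l) ∈ diag l lam := by
      have : k - (∑ r' ∈ range i, csz l n lam r') - (∑ r' ∈ range r, lam c r') - 1
          < lam c r := by omega
      exact this
    rw [initTab_apply_mem hmem]
    rw [partialSum_eq]
    dsimp only
    rw [show (c : ℕ) = i from rfl]
    omega

lemma initTab_rowcol (hlam : IsMultipartition l n lam) :
    RowColIncreasing l lam (initTab l n lam) := by
  constructor
  · intro c r j h
    have h1 : ((c, r, j) : Node l) ∈ diag l lam := by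
      have : j < lam c r := by omega
      exact this
    have h2 : ((c, r, j + 1) : Node l) ∈ diag l lam := h
    rw [initTab_apply_mem h1, initTab_apply_mem h2]
    dsimp only
    omega
  · intro c r j h
    have hle : lam c (r + 1) ≤ lam c r := hlam.1 c (Nat.le_succ r)
    have h1 : ((c, r, j) : Node l) ∈ diag l lam := by
      have : j < lam c r := lt_of_lt_of_le h hle
      exact this
    have h2 : ((c, r + 1, j) : Node l) ∈ diag l lam := h
    rw [initTab_apply_mem h1, initTab_apply_mem h2]
    have h3 : partialSum l n lam c (r + 1) = partialSum l n lam c r + lam c r :=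
      partialSum_succ c r
    dsimp only
    have : j < lam c r := lt_of_lt_of_le h hle
    omega

lemma initTab_std (hlam : IsMultipartition l n lam) :
    IsStdTab l n lam (initTab l n lam) := by
  refine ⟨hlam, ⟨⟨?_, initTab_injOn hlam, initTab_surjOn hlam⟩, ?_⟩, initTab_rowcol hlam⟩
  · intro x hx
    exact Set.mem_Icc.2 ⟨initTab_pos hx, initTab_le hlam hx⟩
  · intro x hx
    exact initTab_apply_not_mem hx

end InitTab

end Paper
end

noncomputable section
open scoped Classical
namespace Paper
open Finset

section SelfRest

variable {l M N : ℕ}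

lemma filter_lt_range_card (A B : ℕ) : ((range A).filter (fun j => j < B)).card = min A B := by
  have h : (range A).filter (fun j => j < B) = range (min A B) := by
    ext j
    simp [Finset.mem_filter, Finset.mem_range, lt_min_iff]
  rw [h, Finset.card_range]

lemma restShape_initTab (lam' : Fin l → ℕ → ℕ) (i : ℕ) (c : Fin l) (r : ℕ) :
    restShape l lam' (initTab l M lam') i c r
      = min (lam' c r) (i - partialSum l M lam' c r) := by
  unfold restShape
  have hcong : (range (lam' c r)).filter (fun j => initTab l M lam' (c, r, j) ≤ i)
      = (range (lam' c r)).filter (fun j => j < i - partialSum l M lam' c r) := by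
    apply Finset.filter_congr
    intro j hj
    have hj' : j < lam' c r := Finset.mem_range.1 hj
    have hmem : ((c, r, j) : Node l) ∈ diag l lam' := hj'
    rw [initTab_apply_mem (n := M) hmem]
    dsimp only
    omega
  rw [hcong, filter_lt_range_card]

lemma initTab_restShape_self {lam' : Fin l → ℕ → ℕ} (h : IsMultipartition l M lam')
    (hMN : M ≤ N) {x : Node l} (hx : x ∈ diag l lam') :
    initTab l N (restShape l lam' (initTab l M lam') (initTab l M lam' x)) x
      = initTab l M lam' x := by
  set i := initTab l M lam' x with hi
  set σ := restShape l lam' (initTab l M lam') i with hσdef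
  have hival : i = partialSum l M lam' x.1 x.2.1 + x.2.2 + 1 := initTab_apply_mem hx
  have hσ : ∀ (c : Fin l) (r : ℕ), σ c r = min (lam' c r) (i - partialSum l M lam' c r) :=
    fun c r => restShape_initTab lam' i c r
  -- rows in earlier components are full
  have claim1 : ∀ (c' : Fin l) (r : ℕ), c'.1 < x.1.1 → σ c' r = lam' c' r := by
    intro c' r hc'
    rcases Nat.eq_zero_or_pos (lam' c' r) with h0 | h0
    · rw [hσ, h0]; simp
    · have hrM : r < M := h.2.1 c' r (by omega)
      have h1 : partialSum l M lam' c' r + lam' c' r = partialSum l M lam' c' (r + 1) :=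
        (partialSum_succ c' r).symm
      have h2 : partialSum l M lam' c' (r + 1)
          ≤ (∑ ii ∈ range c'.1, csz l M lam' ii) + compSize l M lam' c' :=
        partialSum_le_P_comp h c' (r + 1)
      have h3 := P_comp_le_P (lam := lam') (n := M) c' x.1 hc'
      have h4 := P_le_partialSum (lam := lam') (n := M) x.1 x.2.1
      rw [hσ]
      omega
  -- earlier rows in the same component are full
  have claim2 : ∀ r', r' < x.2.1 → σ x.1 r' = lam' x.1 r' := by
    intro r' hr'
    rcases Nat.eq_zero_or_pos (lam' x.1 r') with h0 | h0
    · rw [hσ, h0]; simp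
    · have h1 : partialSum l M lam' x.1 r' + lam' x.1 r' = partialSum l M lam' x.1 (r' + 1) :=
        (partialSum_succ x.1 r').symm
      have h2 : partialSum l M lam' x.1 (r' + 1) ≤ partialSum l M lam' x.1 x.2.1 :=
        partialSum_mono_row x.1 hr'
      rw [hσ]
      omega
  have claim3 : x ∈ diag l σ := by
    have hx' : x.2.2 < lam' x.1 x.2.1 := hx
    have : σ x.1 x.2.1 = min (lam' x.1 x.2.1) (i - partialSum l M lam' x.1 x.2.1) :=
      hσ x.1 x.2.1
    have hmem : x.2.2 < σ x.1 x.2.1 := by omega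
    exact hmem
  rw [initTab_apply_mem (n := N) claim3]
  have hPS : partialSum l N σ x.1 x.2.1 = partialSum l M lam' x.1 x.2.1 := by
    rw [partialSum_eq, partialSum_eq]
    have e1 : ∑ ii ∈ range x.1.1, csz l N σ ii = ∑ ii ∈ range x.1.1, csz l M lam' ii := by
      apply Finset.sum_congr rfl
      intro ii hii
      have hiil : ii < l := lt_trans (Finset.mem_range.1 hii) x.1.2
      have hcomp : compSize l N σ ⟨ii, hiil⟩ = compSize l M lam' ⟨ii, hiil⟩ := by
        unfold compSize
        have e2 : ∑ r ∈ range N, σ ⟨ii, hiil⟩ r = ∑ r ∈ range N, lam' ⟨ii, hiil⟩ r :=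
          Finset.sum_congr rfl (fun r _ => claim1 ⟨ii, hiil⟩ r (Finset.mem_range.1 hii))
        rw [e2]
        exact sum_range_eq_of_support (fun r hr => h.2.1 ⟨ii, hiil⟩ r hr) hMN
      simp [csz, hiil, hcomp]
    have e3 : ∑ r ∈ range x.2.1, σ x.1 r = ∑ r ∈ range x.2.1, lam' x.1 r :=
      Finset.sum_congr rfl (fun r hr => claim2 r (Finset.mem_range.1 hr))
    rw [e1, e3]
  rw [hPS]
  omega

end SelfRest

end Paper
end

noncomputable section
open scoped Classical
namespace Paper
open Finset

/-- the embedding of `γ`-nodes into `λ`-nodes. -/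
def phiN {ℓ : ℕ} (hl : 0 < ℓ) (a : ℕ) : Node 1 → Node ℓ :=
  fun y => (lastC ℓ hl, a + y.2.1, y.2.2)

/-- the extension of a `γ`-tableau by the initial `μ`-tableau. -/
def extT {ℓ : ℕ} (hl : 0 < ℓ) (n : ℕ) (lam : Fin ℓ → ℕ → ℕ) (a : ℕ)
    (U : Node 1 → ℕ) : Node ℓ → ℕ := fun x =>
  if x.1 = lastC ℓ hl ∧ a ≤ x.2.1 then
    (if U (0, x.2.1 - a, x.2.2) = 0 then 0
      else U (0, x.2.1 - a, x.2.2) + cutM ℓ n hl lam a)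
  else initTab ℓ (cutM ℓ n hl lam a) (muPart ℓ hl lam a) x

section Cut

variable {ℓ : ℕ} (hl : 0 < ℓ) {n : ℕ} (lam : Fin ℓ → ℕ → ℕ) (a : ℕ)

lemma le_lastC (c : Fin ℓ) : c ≤ lastC ℓ hl := by
  have := c.2
  simp only [Fin.le_def, lastC]
  omega

lemma lt_lastC_of_ne {c : Fin ℓ} (h : c ≠ lastC ℓ hl) : c < lastC ℓ hl :=
  lt_of_le_of_ne (le_lastC hl c) h

lemma node1_eta (y : Node 1) : ((0 : Fin 1), y.2.1, y.2.2) = y := by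
  obtain ⟨c, r, j⟩ := y
  have : c = 0 := Subsingleton.elim _ _
  rw [this]

lemma gamma1_apply (c : Fin 1) (r : ℕ) :
    gamma1 ℓ hl lam a c r = lam (lastC ℓ hl) (a + r) := rfl

variable {lam a}

lemma comp_le_cutM {c : Fin ℓ} (hc : c < lastC ℓ hl) :
    compSize ℓ n lam c ≤ cutM ℓ n hl lam a := by
  unfold cutM
  have h1 : compSize ℓ n lam c
      ≤ ∑ c' ∈ Finset.univ.filter (fun c' : Fin ℓ => c' < lastC ℓ hl), compSize ℓ n lam c' :=
    Finset.single_le_sum (fun i _ => Nat.zero_le _) (by simp [hc])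
  omega

lemma row_succ_le_compSize (hlam : IsMultipartition ℓ n lam) {c : Fin ℓ} {r : ℕ} (h : lam c r ≠ 0) :
    r + 1 ≤ compSize ℓ n lam c := by
  have hrn : r < n := hlam.2.1 c r h
  have h1 : ∀ r' ∈ range (r + 1), 1 ≤ lam c r' := by
    intro r' hr'
    have := hlam.1 c (show r' ≤ r by have := Finset.mem_range.1 hr'; omega)
    omega
  calc r + 1 = ∑ _r' ∈ range (r + 1), 1 := by simp
    _ ≤ ∑ r' ∈ range (r + 1), lam c r' := Finset.sum_le_sum h1
    _ ≤ ∑ r' ∈ range n, lam c r' := sum_range_le_sum_range (by omega)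

lemma supp_lt_cutM (hlam : IsMultipartition ℓ n lam) {c : Fin ℓ} {r : ℕ} (hc : c < lastC ℓ hl) (h : lam c r ≠ 0) :
    r < cutM ℓ n hl lam a := by
  have := row_succ_le_compSize hlam h
  have := comp_le_cutM hl (n := n) (lam := lam) (a := a) hc
  omega

lemma a_le_rowsum (hlam : IsMultipartition ℓ n lam) (ha : lam (lastC ℓ hl) a ≠ 0) :
    a ≤ ∑ r ∈ range a, lam (lastC ℓ hl) r := by
  have h1 : ∀ r' ∈ range a, 1 ≤ lam (lastC ℓ hl) r' := by
    intro r' hr'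
    have := hlam.1 (lastC ℓ hl) (show r' ≤ a by have := Finset.mem_range.1 hr'; omega)
    omega
  calc a = ∑ _r' ∈ range a, 1 := by simp
    _ ≤ _ := Finset.sum_le_sum h1

lemma a_le_cutM (hlam : IsMultipartition ℓ n lam) (ha : lam (lastC ℓ hl) a ≠ 0) : a ≤ cutM ℓ n hl lam a := by
  have := a_le_rowsum hl hlam ha
  unfold cutM
  omega

lemma supp_last_lt_cutM (hlam : IsMultipartition ℓ n lam) {r : ℕ} (hr : r < a) (h : lam (lastC ℓ hl) r ≠ 0) :
    r < cutM ℓ n hl lam a := by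
  have h1 : ∀ r' ∈ range (r + 1), 1 ≤ lam (lastC ℓ hl) r' := by
    intro r' hr'
    have := hlam.1 (lastC ℓ hl) (show r' ≤ r by have := Finset.mem_range.1 hr'; omega)
    omega
  have h2 : r + 1 ≤ ∑ r' ∈ range a, lam (lastC ℓ hl) r' :=
    calc r + 1 = ∑ _r' ∈ range (r + 1), 1 := by simp
      _ ≤ ∑ r' ∈ range (r + 1), lam (lastC ℓ hl) r' := Finset.sum_le_sum h1
      _ ≤ ∑ r' ∈ range a, lam (lastC ℓ hl) r' := sum_range_le_sum_range hr
  unfold cutM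
  omega

lemma mu_supp (hlam : IsMultipartition ℓ n lam) (ha : lam (lastC ℓ hl) a ≠ 0) :
    ∀ (c : Fin ℓ) (r : ℕ), muPart ℓ hl lam a c r ≠ 0 → r < cutM ℓ n hl lam a := by
  intro c r h
  unfold muPart at h
  by_cases hc : c = lastC ℓ hl ∧ a ≤ r
  · rw [if_pos hc] at h; omega
  · rw [if_neg hc] at h
    by_cases hc2 : c = lastC ℓ hl
    · have hr : r < a := by
        by_contra hr'
        exact hc ⟨hc2, by omega⟩
      subst hc2
      exact supp_last_lt_cutM hl hlam hr h
    · exact supp_lt_cutM hl hlam (lt_lastC_of_ne hl hc2) h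

lemma filter_not_lt_lastC :
    Finset.univ.filter (fun c : Fin ℓ => ¬ c < lastC ℓ hl) = {lastC ℓ hl} := by
  ext c
  simp only [Finset.mem_filter, Finset.mem_univ, true_and, Finset.mem_singleton, not_lt]
  constructor
  · intro h
    exact le_antisymm (le_lastC hl c) h
  · intro h
    rw [h]

lemma sum_univ_split (g : Fin ℓ → ℕ) :
    ∑ c, g c = (∑ c ∈ Finset.univ.filter (fun c : Fin ℓ => c < lastC ℓ hl), g c)
      + g (lastC ℓ hl) := by
  rw [← Finset.sum_filter_add_sum_filter_not Finset.univ (fun c : Fin ℓ => c < lastC ℓ hl) g]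
  rw [filter_not_lt_lastC hl, Finset.sum_singleton]

lemma cutM_le_n (hlam : IsMultipartition ℓ n lam) : cutM ℓ n hl lam a ≤ n := by
  have h1 : ∑ r ∈ range a, lam (lastC ℓ hl) r ≤ compSize ℓ n lam (lastC ℓ hl) :=
    sum_range_le_of_support (fun r h => hlam.2.1 _ r h) a
  have h2 := sum_univ_split hl (compSize ℓ n lam)
  have h3 : ∑ c, compSize ℓ n lam c = n := hlam.2.2
  rw [h3] at h2
  unfold cutM
  omega

lemma mu_ismulti (hlam : IsMultipartition ℓ n lam) (ha : lam (lastC ℓ hl) a ≠ 0) :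
    IsMultipartition ℓ (cutM ℓ n hl lam a) (muPart ℓ hl lam a) := by
  refine ⟨?_, mu_supp hl hlam ha, ?_⟩
  · intro c r r' h
    unfold muPart
    by_cases h1 : c = lastC ℓ hl ∧ a ≤ r
    · rw [if_pos h1, if_pos ⟨h1.1, le_trans h1.2 h⟩]
    · rw [if_neg h1]
      by_cases h2 : c = lastC ℓ hl ∧ a ≤ r'
      · rw [if_pos h2]; exact Nat.zero_le _
      · rw [if_neg h2]; exact hlam.1 c h
  · rw [sum_univ_split hl]
    have e1 : ∀ c ∈ Finset.univ.filter (fun c : Fin ℓ => c < lastC ℓ hl),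
        ∑ r ∈ range (cutM ℓ n hl lam a), muPart ℓ hl lam a c r = compSize ℓ n lam c := by
      intro c hc
      simp only [Finset.mem_filter, Finset.mem_univ, true_and] at hc
      have hne : c ≠ lastC ℓ hl := ne_of_lt hc
      have e2 : ∀ r, muPart ℓ hl lam a c r = lam c r := by
        intro r
        unfold muPart
        rw [if_neg (by tauto)]
      have e3 : ∑ r ∈ range (cutM ℓ n hl lam a), muPart ℓ hl lam a c r
          = ∑ r ∈ range (cutM ℓ n hl lam a), lam c r :=
        Finset.sum_congr rfl (fun r _ => e2 r)
      rw [e3]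
      unfold compSize
      rcases le_or_gt (cutM ℓ n hl lam a) n with hmn | hmn
      · rw [sum_range_eq_of_support (fun r h => supp_lt_cutM hl hlam hc h) hmn]
      · rw [sum_range_eq_of_support (M := n) (fun r h => hlam.2.1 c r h) hmn.le]
    rw [Finset.sum_congr rfl e1]
    have e4 : ∑ r ∈ range (cutM ℓ n hl lam a), muPart ℓ hl lam a (lastC ℓ hl) r
        = ∑ r ∈ range a, lam (lastC ℓ hl) r := by
      have e5 : ∑ r ∈ range (cutM ℓ n hl lam a), muPart ℓ hl lam a (lastC ℓ hl) r
          = ∑ r ∈ range a, muPart ℓ hl lam a (lastC ℓ hl) r := by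
        apply sum_range_eq_of_support (M := a)
        · intro r h
          unfold muPart at h
          by_contra hr
          exact h (if_pos ⟨rfl, by omega⟩)
        · exact a_le_cutM hl hlam ha
      rw [e5]
      apply Finset.sum_congr rfl
      intro r hr
      unfold muPart
      rw [if_neg (by have := Finset.mem_range.1 hr; omega)]
    rw [e4]
    rfl

end Cut

end Paper
end

noncomputable section
open scoped Classical
namespace Paper
open Finset

section Cut2

variable {ℓ : ℕ} (hl : 0 < ℓ) {n : ℕ} {lam : Fin ℓ → ℕ → ℕ} {a : ℕ}

lemma mem_diag_mu_iff {x : Node ℓ} :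
    x ∈ diag ℓ (muPart ℓ hl lam a)
      ↔ x ∈ diag ℓ lam ∧ ¬(x.1 = lastC ℓ hl ∧ a ≤ x.2.1) := by
  unfold diag muPart
  simp only [Set.mem_setOf_eq]
  by_cases h : x.1 = lastC ℓ hl ∧ a ≤ x.2.1
  · rw [if_pos h]
    simp [h]
  · rw [if_neg h]
    tauto

lemma phiN_mem_diag {y : Node 1} :
    phiN hl a y ∈ diag ℓ lam ↔ y ∈ diag 1 (gamma1 ℓ hl lam a) := Iff.rfl

lemma gammaNode_mem {x : Node ℓ} (hreg : x.1 = lastC ℓ hl ∧ a ≤ x.2.1) :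
    x ∈ diag ℓ lam ↔ (((0 : Fin 1), x.2.1 - a, x.2.2) : Node 1) ∈ diag 1 (gamma1 ℓ hl lam a) := by
  unfold diag
  simp only [Set.mem_setOf_eq]
  have h1 : gamma1 ℓ hl lam a 0 (x.2.1 - a) = lam (lastC ℓ hl) (a + (x.2.1 - a)) := rfl
  have h2 : a + (x.2.1 - a) = x.2.1 := by omega
  rw [h1, h2, hreg.1]

lemma tab_val_mem {l N : ℕ} {lamf : Fin l → ℕ → ℕ} {U : Node l → ℕ}
    (hU : IsTableau l N lamf U) {y : Node l} (hy : y ∈ diag l lamf) :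
    1 ≤ U y ∧ U y ≤ N :=
  Set.mem_Icc.1 (hU.1.1 hy)

lemma extT_not_region {U : Node 1 → ℕ} {x : Node ℓ} (h : ¬(x.1 = lastC ℓ hl ∧ a ≤ x.2.1)) :
    extT hl n lam a U x = initTab ℓ (cutM ℓ n hl lam a) (muPart ℓ hl lam a) x :=
  if_neg h

lemma extT_region_val {U : Node 1 → ℕ}
    (hU : IsTableau 1 (n - cutM ℓ n hl lam a) (gamma1 ℓ hl lam a) U)
    {x : Node ℓ} (hreg : x.1 = lastC ℓ hl ∧ a ≤ x.2.1) (hx : x ∈ diag ℓ lam) :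
    extT hl n lam a U x = U ((0 : Fin 1), x.2.1 - a, x.2.2) + cutM ℓ n hl lam a := by
  unfold extT
  rw [if_pos hreg]
  have hmem := (gammaNode_mem hl hreg).1 hx
  have := (tab_val_mem hU hmem).1
  rw [if_neg (by omega)]

lemma extT_phi {U : Node 1 → ℕ}
    (hU : IsTableau 1 (n - cutM ℓ n hl lam a) (gamma1 ℓ hl lam a) U)
    {y : Node 1} (hy : y ∈ diag 1 (gamma1 ℓ hl lam a)) :
    extT hl n lam a U (phiN hl a y) = U y + cutM ℓ n hl lam a := by
  have hreg : (phiN hl a y).1 = lastC ℓ hl ∧ a ≤ (phiN hl a y).2.1 :=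
    ⟨rfl, Nat.le_add_right a _⟩
  rw [extT_region_val hl hU hreg ((phiN_mem_diag hl).2 hy)]
  have h1 : (phiN hl a y).2.1 - a = y.2.1 := by
    show a + y.2.1 - a = y.2.1
    omega
  have h2 : (phiN hl a y).2.2 = y.2.2 := rfl
  rw [h1, h2, node1_eta]

lemma extT_zero_off {U : Node 1 → ℕ}
    (hU : IsTableau 1 (n - cutM ℓ n hl lam a) (gamma1 ℓ hl lam a) U)
    {x : Node ℓ} (hx : x ∉ diag ℓ lam) :
    extT hl n lam a U x = 0 := by
  unfold extT
  by_cases hreg : x.1 = lastC ℓ hl ∧ a ≤ x.2.1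
  · rw [if_pos hreg]
    have : (((0 : Fin 1), x.2.1 - a, x.2.2) : Node 1) ∉ diag 1 (gamma1 ℓ hl lam a) := by
      intro hmem
      exact hx ((gammaNode_mem hl hreg).2 hmem)
    rw [hU.2 _ this]
    simp
  · rw [if_neg hreg]
    apply initTab_apply_not_mem
    intro hmem
    exact hx ((mem_diag_mu_iff hl).1 hmem).1

lemma extT_val_mu (hlam : IsMultipartition ℓ n lam) (ha : lam (lastC ℓ hl) a ≠ 0)
    {U : Node 1 → ℕ} {x : Node ℓ} (hx : x ∈ diag ℓ (muPart ℓ hl lam a)) :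
    1 ≤ extT hl n lam a U x ∧ extT hl n lam a U x ≤ cutM ℓ n hl lam a := by
  rw [extT_not_region hl ((mem_diag_mu_iff hl).1 hx).2]
  exact ⟨initTab_pos hx, initTab_le (mu_ismulti hl hlam ha) hx⟩

lemma extT_val_reg (hlam : IsMultipartition ℓ n lam) {U : Node 1 → ℕ}
    (hU : IsTableau 1 (n - cutM ℓ n hl lam a) (gamma1 ℓ hl lam a) U)
    {x : Node ℓ} (hreg : x.1 = lastC ℓ hl ∧ a ≤ x.2.1) (hx : x ∈ diag ℓ lam) :
    cutM ℓ n hl lam a + 1 ≤ extT hl n lam a U x ∧ extT hl n lam a U x ≤ n := by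
  rw [extT_region_val hl hU hreg hx]
  have hmem := (gammaNode_mem hl hreg).1 hx
  have h1 := tab_val_mem hU hmem
  have h2 := cutM_le_n hl (a := a) hlam
  omega

lemma extT_std (hlam : IsMultipartition ℓ n lam) (ha : lam (lastC ℓ hl) a ≠ 0)
    {U : Node 1 → ℕ}
    (hU : IsStdTab 1 (n - cutM ℓ n hl lam a) (gamma1 ℓ hl lam a) U) :
    IsStdTab ℓ n lam (extT hl n lam a U) := by
  have hmu := mu_ismulti hl hlam ha
  have hmn := cutM_le_n hl (lam := lam) (a := a) hlam
  refine ⟨hlam, ⟨⟨?_, ?_, ?_⟩, fun x hx => extT_zero_off hl hU.2.1 hx⟩, ?_, ?_⟩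
  · -- MapsTo
    intro x hx
    by_cases hreg : x.1 = lastC ℓ hl ∧ a ≤ x.2.1
    · have := extT_val_reg hl hlam hU.2.1 hreg hx
      exact Set.mem_Icc.2 ⟨by omega, this.2⟩
    · have := extT_val_mu hl hlam ha (U := U) ((mem_diag_mu_iff hl).2 ⟨hx, hreg⟩)
      exact Set.mem_Icc.2 ⟨this.1, by omega⟩
  · -- InjOn
    intro x hx y hy he
    by_cases hregx : x.1 = lastC ℓ hl ∧ a ≤ x.2.1
    · by_cases hregy : y.1 = lastC ℓ hl ∧ a ≤ y.2.1
      · rw [extT_region_val hl hU.2.1 hregx hx, extT_region_val hl hU.2.1 hregy hy] at he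
        have hex := (gammaNode_mem hl hregx).1 hx
        have hey := (gammaNode_mem hl hregy).1 hy
        have := hU.2.1.1.2.1 hex hey (by omega)
        simp only [Prod.mk.injEq] at this
        obtain ⟨cx, rx, jx⟩ := x
        obtain ⟨cy, ry, jy⟩ := y
        simp only at hregx hregy this
        rw [hregx.1, hregy.1]
        have : rx = ry ∧ jx = jy := by
          obtain ⟨-, h1, h2⟩ := this
          constructor
          · omega
          · exact h2
        rw [this.1, this.2]
      · have h1 := extT_val_reg hl hlam hU.2.1 hregx hx
        have h2 := extT_val_mu hl hlam ha (U := U) ((mem_diag_mu_iff hl).2 ⟨hy, hregy⟩)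
        omega
    · by_cases hregy : y.1 = lastC ℓ hl ∧ a ≤ y.2.1
      · have h1 := extT_val_mu hl hlam ha (U := U) ((mem_diag_mu_iff hl).2 ⟨hx, hregx⟩)
        have h2 := extT_val_reg hl hlam hU.2.1 hregy hy
        omega
      · rw [extT_not_region hl hregx, extT_not_region hl hregy] at he
        exact initTab_injOn hmu ((mem_diag_mu_iff hl).2 ⟨hx, hregx⟩)
          ((mem_diag_mu_iff hl).2 ⟨hy, hregy⟩) he
  · -- SurjOn
    intro k hk
    obtain ⟨hk1, hk2⟩ := Set.mem_Icc.1 hk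
    rcases le_or_gt k (cutM ℓ n hl lam a) with hkm | hkm
    · obtain ⟨x, hx, hval⟩ := initTab_surjOn hmu (Set.mem_Icc.2 ⟨hk1, hkm⟩)
      refine ⟨x, ((mem_diag_mu_iff hl).1 hx).1, ?_⟩
      rw [extT_not_region hl ((mem_diag_mu_iff hl).1 hx).2]
      exact hval
    · obtain ⟨y, hy, hval⟩ := hU.2.1.1.2.2
        (Set.mem_Icc.2 (⟨by omega, by omega⟩ : 1 ≤ k - cutM ℓ n hl lam a ∧ _))
      refine ⟨phiN hl a y, (phiN_mem_diag hl).2 hy, ?_⟩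
      rw [extT_phi hl hU.2.1 hy, hval]
      omega
  · -- rows increase
    intro c r j h
    by_cases hreg : c = lastC ℓ hl ∧ a ≤ r
    · have hx1 : ((c, r, j) : Node ℓ) ∈ diag ℓ lam := by
        have : j < lam c r := by omega
        exact this
      have hx2 : ((c, r, j + 1) : Node ℓ) ∈ diag ℓ lam := h
      rw [extT_region_val hl hU.2.1 hreg hx1, extT_region_val hl hU.2.1 hreg hx2]
      have hrow := hU.2.2.1 0 (r - a) j (by
        show j + 1 < gamma1 ℓ hl lam a 0 (r - a)
        rw [gamma1_apply]
        have : a + (r - a) = r := by omega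
        rw [this, ← hreg.1]
        exact h)
      dsimp only
      omega
    · have hx1 : ((c, r, j) : Node ℓ) ∈ diag ℓ (muPart ℓ hl lam a) := by
        apply (mem_diag_mu_iff hl).2
        have hd : ((c, r, j) : Node ℓ) ∈ diag ℓ lam := by
          have : j < lam c r := by omega
          exact this
        exact ⟨hd, hreg⟩
      have hx2 : ((c, r, j + 1) : Node ℓ) ∈ diag ℓ (muPart ℓ hl lam a) := by
        apply (mem_diag_mu_iff hl).2
        exact ⟨h, hreg⟩
      rw [extT_not_region hl hreg, extT_not_region hl hreg]
      apply (initTab_rowcol hmu).1 c r j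
      show j + 1 < muPart ℓ hl lam a c r
      unfold muPart
      rw [if_neg hreg]
      exact h
  · -- columns increase
    intro c r j h
    have hle : lam c (r + 1) ≤ lam c r := hlam.1 c (Nat.le_succ r)
    have hx1 : ((c, r, j) : Node ℓ) ∈ diag ℓ lam := by
      have : j < lam c r := by omega
      exact this
    have hx2 : ((c, r + 1, j) : Node ℓ) ∈ diag ℓ lam := h
    by_cases hreg2 : c = lastC ℓ hl ∧ a ≤ r + 1
    · by_cases hreg1 : a ≤ r
      · rw [extT_region_val hl hU.2.1 ⟨hreg2.1, hreg1⟩ hx1,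
          extT_region_val hl hU.2.1 hreg2 hx2]
        have hcol := hU.2.2.2 0 (r - a) j (by
          show j < gamma1 ℓ hl lam a 0 (r - a + 1)
          rw [gamma1_apply]
          have : a + (r - a + 1) = r + 1 := by omega
          rw [this, ← hreg2.1]
          exact h)
        dsimp only
        have hrw : (r + 1) - a = (r - a) + 1 := by omega
        rw [hrw]
        omega
      · have hmu1 : ((c, r, j) : Node ℓ) ∈ diag ℓ (muPart ℓ hl lam a) :=
          (mem_diag_mu_iff hl).2 ⟨hx1, by tauto⟩
        have h1 := extT_val_mu hl hlam ha (U := U) hmu1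
        have h2 := extT_val_reg hl hlam hU.2.1 hreg2 hx2
        omega
    · have hreg1 : ¬(c = lastC ℓ hl ∧ a ≤ r) := by
        intro hc
        exact hreg2 ⟨hc.1, by omega⟩
      rw [extT_not_region hl hreg1, extT_not_region hl hreg2]
      apply (initTab_rowcol hmu).2 c r j
      show j < muPart ℓ hl lam a c (r + 1)
      unfold muPart
      rw [if_neg hreg2]
      exact h

end Cut2

end Paper
end

noncomputable section
open scoped Classical
namespace Paper
open Finset

section Cut3

variable {ℓ : ℕ} (hl : 0 < ℓ) {n : ℕ} {lam : Fin ℓ → ℕ → ℕ} {a : ℕ}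

lemma fin1_filter_lt_empty (y1 : Fin 1) :
    (Finset.univ.filter (fun c : Fin 1 => c < y1)) = ∅ := by
  apply Finset.filter_eq_empty_iff.2
  intro c _
  have : c = y1 := Subsingleton.elim _ _
  rw [this]
  exact lt_irrefl _

lemma compSize_mu_eq (hlam : IsMultipartition ℓ n lam) {c : Fin ℓ} (hc : c < lastC ℓ hl) :
    compSize ℓ (cutM ℓ n hl lam a) (muPart ℓ hl lam a) c = compSize ℓ n lam c := by
  unfold compSize
  have e2 : ∀ r, muPart ℓ hl lam a c r = lam c r := by
    intro r
    unfold muPart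
    rw [if_neg (by have := ne_of_lt hc; tauto)]
  rw [Finset.sum_congr rfl (fun r _ => e2 r)]
  rcases le_or_gt (cutM ℓ n hl lam a) n with hmn | hmn
  · exact (sum_range_eq_of_support (fun r h => supp_lt_cutM hl hlam hc h) hmn).symm
  · exact sum_range_eq_of_support (M := n) (fun r h => hlam.2.1 c r h) hmn.le

lemma initTab_lam_mu (hlam : IsMultipartition ℓ n lam) {x : Node ℓ}
    (hnot : ¬(x.1 = lastC ℓ hl ∧ a ≤ x.2.1)) :
    initTab ℓ n lam x = initTab ℓ (cutM ℓ n hl lam a) (muPart ℓ hl lam a) x := by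
  have hmu_eq : muPart ℓ hl lam a x.1 x.2.1 = lam x.1 x.2.1 := by
    unfold muPart
    rw [if_neg hnot]
  by_cases hx : x ∈ diag ℓ lam
  · have hx' : x ∈ diag ℓ (muPart ℓ hl lam a) := by
      have hd : x.2.2 < muPart ℓ hl lam a x.1 x.2.1 := by rw [hmu_eq]; exact hx
      exact hd
    rw [initTab_apply_mem hx, initTab_apply_mem hx']
    have hps : partialSum ℓ n lam x.1 x.2.1
        = partialSum ℓ (cutM ℓ n hl lam a) (muPart ℓ hl lam a) x.1 x.2.1 := by
      unfold partialSum
      have e1 : ∀ c' ∈ Finset.univ.filter (fun c' : Fin ℓ => c' < x.1),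
          compSize ℓ n lam c' = compSize ℓ (cutM ℓ n hl lam a) (muPart ℓ hl lam a) c' := by
        intro c' hc'
        simp only [Finset.mem_filter, Finset.mem_univ, true_and] at hc'
        have hclt : c' < lastC ℓ hl := lt_of_lt_of_le hc' (le_lastC hl x.1)
        exact (compSize_mu_eq hl hlam hclt).symm
      have e2 : ∀ r ∈ range x.2.1, lam x.1 r = muPart ℓ hl lam a x.1 r := by
        intro r hr
        unfold muPart
        by_cases hc : x.1 = lastC ℓ hl
        · have hra : r < a := by
            have : ¬ a ≤ x.2.1 := fun hle => hnot ⟨hc, hle⟩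
            have := Finset.mem_range.1 hr
            omega
          rw [if_neg (by omega)]
        · rw [if_neg (by tauto)]
      rw [Finset.sum_congr rfl e1, Finset.sum_congr rfl e2]
    rw [hps]
  · have hx' : x ∉ diag ℓ (muPart ℓ hl lam a) := by
      intro hmem
      exact hx ((mem_diag_mu_iff hl).1 hmem).1
    rw [initTab_apply_not_mem hx, initTab_apply_not_mem hx']

lemma initTab_lam_phi (hlam : IsMultipartition ℓ n lam) {y : Node 1}
    (hy : y ∈ diag 1 (gamma1 ℓ hl lam a)) :
    initTab ℓ n lam (phiN hl a y)
      = initTab 1 (n - cutM ℓ n hl lam a) (gamma1 ℓ hl lam a) y + cutM ℓ n hl lam a := by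
  have hx : phiN hl a y ∈ diag ℓ lam := (phiN_mem_diag hl).2 hy
  rw [initTab_apply_mem hx, initTab_apply_mem hy]
  unfold partialSum
  have h1 : (phiN hl a y).1 = lastC ℓ hl := rfl
  have h2 : (phiN hl a y).2.1 = a + y.2.1 := rfl
  have h3 : (phiN hl a y).2.2 = y.2.2 := rfl
  rw [h1, h2, h3]
  rw [Finset.sum_range_add (lam (lastC ℓ hl)) a y.2.1]
  rw [fin1_filter_lt_empty y.1, Finset.sum_empty]
  have h4 : ∀ r, gamma1 ℓ hl lam a y.1 r = lam (lastC ℓ hl) (a + r) := fun r => rfl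
  rw [Finset.sum_congr rfl (fun r _ => h4 r)]
  unfold cutM
  omega

lemma initTab_eq_extT (hlam : IsMultipartition ℓ n lam)
    (hγ : IsMultipartition 1 (n - cutM ℓ n hl lam a) (gamma1 ℓ hl lam a)) :
    initTab ℓ n lam
      = extT hl n lam a (initTab 1 (n - cutM ℓ n hl lam a) (gamma1 ℓ hl lam a)) := by
  have hγt : IsTableau 1 (n - cutM ℓ n hl lam a) (gamma1 ℓ hl lam a)
      (initTab 1 (n - cutM ℓ n hl lam a) (gamma1 ℓ hl lam a)) := (initTab_std hγ).2.1
  funext x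
  by_cases hreg : x.1 = lastC ℓ hl ∧ a ≤ x.2.1
  · by_cases hx : x ∈ diag ℓ lam
    · have hxeq : x = phiN hl a (((0 : Fin 1), x.2.1 - a, x.2.2) : Node 1) := by
        obtain ⟨c, r, j⟩ := x
        simp only at hreg
        unfold phiN
        simp only
        rw [hreg.1]
        have : a + (r - a) = r := by omega
        rw [this]
      have hymem := (gammaNode_mem hl hreg).1 hx
      rw [hxeq, initTab_lam_phi hl hlam hymem, extT_phi hl hγt hymem]
    · rw [initTab_apply_not_mem hx, extT_zero_off hl hγt hx]
  · rw [extT_not_region hl hreg]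
    exact initTab_lam_mu hl hlam hreg

lemma restShape_extT_le (hlam : IsMultipartition ℓ n lam)
    {U : Node 1 → ℕ} (hU : IsTableau 1 (n - cutM ℓ n hl lam a) (gamma1 ℓ hl lam a) U)
    {k : ℕ} (hk : k ≤ cutM ℓ n hl lam a) :
    restShape ℓ lam (extT hl n lam a U) k
      = restShape ℓ (muPart ℓ hl lam a) (initTab ℓ (cutM ℓ n hl lam a) (muPart ℓ hl lam a)) k := by
  funext c r
  unfold restShape
  by_cases hreg : c = lastC ℓ hl ∧ a ≤ r
  · have h1 : ((range (lam c r)).filter (fun j => extT hl n lam a U (c, r, j) ≤ k)) = ∅ := by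
      apply Finset.filter_eq_empty_iff.2
      intro j hj
      have hx : ((c, r, j) : Node ℓ) ∈ diag ℓ lam := by
        have : j < lam c r := Finset.mem_range.1 hj
        exact this
      have := (extT_val_reg hl hlam hU hreg hx).1
      omega
    have h2 : muPart ℓ hl lam a c r = 0 := if_pos hreg
    rw [h1, h2]
    simp
  · have h2 : muPart ℓ hl lam a c r = lam c r := if_neg hreg
    rw [h2]
    apply congrArg
    apply Finset.filter_congr
    intro j hj
    rw [extT_not_region hl hreg]

lemma restShape_extT_big_mu (hlam : IsMultipartition ℓ n lam)
    (ha : lam (lastC ℓ hl) a ≠ 0) {U : Node 1 → ℕ} {k : ℕ} {c : Fin ℓ} {r : ℕ}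
    (hreg : ¬(c = lastC ℓ hl ∧ a ≤ r)) :
    restShape ℓ lam (extT hl n lam a U) (cutM ℓ n hl lam a + k) c r = lam c r := by
  unfold restShape
  have h1 : ((range (lam c r)).filter (fun j => extT hl n lam a U (c, r, j) ≤ cutM ℓ n hl lam a + k))
      = range (lam c r) := by
    apply Finset.filter_true_of_mem
    intro j hj
    have hx : ((c, r, j) : Node ℓ) ∈ diag ℓ lam := by
      have : j < lam c r := Finset.mem_range.1 hj
      exact this
    have hxmu : ((c, r, j) : Node ℓ) ∈ diag ℓ (muPart ℓ hl lam a) :=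
      (mem_diag_mu_iff hl).2 ⟨hx, hreg⟩
    have := (extT_val_mu hl hlam ha (U := U) hxmu).2
    omega
  rw [h1, Finset.card_range]

lemma restShape_extT_big_reg
    {U : Node 1 → ℕ} (hU : IsTableau 1 (n - cutM ℓ n hl lam a) (gamma1 ℓ hl lam a) U)
    {k s : ℕ} :
    restShape ℓ lam (extT hl n lam a U) (cutM ℓ n hl lam a + k) (lastC ℓ hl) (a + s)
      = restShape 1 (gamma1 ℓ hl lam a) U k 0 s := by
  unfold restShape
  have hsz : gamma1 ℓ hl lam a 0 s = lam (lastC ℓ hl) (a + s) := rfl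
  rw [hsz]
  apply congrArg
  apply Finset.filter_congr
  intro j hj
  have hx : ((lastC ℓ hl, a + s, j) : Node ℓ) ∈ diag ℓ lam := by
    have : j < lam (lastC ℓ hl) (a + s) := Finset.mem_range.1 hj
    exact this
  have hreg : ((lastC ℓ hl, a + s, j) : Node ℓ).1 = lastC ℓ hl
      ∧ a ≤ ((lastC ℓ hl, a + s, j) : Node ℓ).2.1 := ⟨rfl, Nat.le_add_right a s⟩
  rw [extT_region_val hl hU hreg hx]
  have h2 : (a + s) - a = s := by omega
  dsimp only
  rw [h2]
  have hymem : (((0 : Fin 1), s, j) : Node 1) ∈ diag 1 (gamma1 ℓ hl lam a) := by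
    have : j < gamma1 ℓ hl lam a 0 s := by rw [hsz]; exact Finset.mem_range.1 hj
    exact this
  have := (tab_val_mem hU hymem).1
  constructor
  · intro h; omega
  · intro h; omega

lemma initTab_restShape_big_phi (hlam : IsMultipartition ℓ n lam)
    (ha : lam (lastC ℓ hl) a ≠ 0)
    {U : Node 1 → ℕ} (hU : IsTableau 1 (n - cutM ℓ n hl lam a) (gamma1 ℓ hl lam a) U)
    {k : ℕ} {y : Node 1} (hy : y ∈ diag 1 (restShape 1 (gamma1 ℓ hl lam a) U k)) :
    initTab ℓ n (restShape ℓ lam (extT hl n lam a U) (cutM ℓ n hl lam a + k)) (phiN hl a y)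
      = initTab 1 (n - cutM ℓ n hl lam a) (restShape 1 (gamma1 ℓ hl lam a) U k) y
        + cutM ℓ n hl lam a := by
  have hy1 : y.1 = (0 : Fin 1) := Subsingleton.elim _ _
  have hy' : y.2.2 < restShape 1 (gamma1 ℓ hl lam a) U k 0 y.2.1 := by
    have hd : y.2.2 < restShape 1 (gamma1 ℓ hl lam a) U k y.1 y.2.1 := hy
    rw [hy1] at hd
    exact hd
  have hmem : phiN hl a y ∈ diag ℓ (restShape ℓ lam (extT hl n lam a U) (cutM ℓ n hl lam a + k)) := by
    have hd : (phiN hl a y).2.2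
        < restShape ℓ lam (extT hl n lam a U) (cutM ℓ n hl lam a + k) (lastC ℓ hl) (a + y.2.1) := by
      rw [restShape_extT_big_reg hl hU]
      exact hy'
    exact hd
  rw [initTab_apply_mem hmem, initTab_apply_mem hy]
  unfold partialSum
  have h1 : (phiN hl a y).1 = lastC ℓ hl := rfl
  have h2 : (phiN hl a y).2.1 = a + y.2.1 := rfl
  have h3 : (phiN hl a y).2.2 = y.2.2 := rfl
  rw [h1, h2, h3]
  rw [fin1_filter_lt_empty y.1, Finset.sum_empty]
  have e1 : ∀ c' ∈ Finset.univ.filter (fun c' : Fin ℓ => c' < lastC ℓ hl),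
      compSize ℓ n (restShape ℓ lam (extT hl n lam a U) (cutM ℓ n hl lam a + k)) c'
        = compSize ℓ n lam c' := by
    intro c' hc'
    simp only [Finset.mem_filter, Finset.mem_univ, true_and] at hc'
    unfold compSize
    apply Finset.sum_congr rfl
    intro r _
    exact restShape_extT_big_mu hl hlam ha (fun hcon => absurd hcon.1 (ne_of_lt hc'))
  have E1 : ∑ c' ∈ Finset.univ.filter (fun c' : Fin ℓ => c' < lastC ℓ hl),
      compSize ℓ n (restShape ℓ lam (extT hl n lam a U) (cutM ℓ n hl lam a + k)) c'
        = ∑ c' ∈ Finset.univ.filter (fun c' : Fin ℓ => c' < lastC ℓ hl),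
          compSize ℓ n lam c' := Finset.sum_congr rfl e1
  rw [E1]
  rw [Finset.sum_range_add (fun r => restShape ℓ lam (extT hl n lam a U)
    (cutM ℓ n hl lam a + k) (lastC ℓ hl) r) a y.2.1]
  have e2 : ∀ r ∈ range a,
      restShape ℓ lam (extT hl n lam a U) (cutM ℓ n hl lam a + k) (lastC ℓ hl) r
        = lam (lastC ℓ hl) r := by
    intro r hr
    exact restShape_extT_big_mu hl hlam ha
      (fun hcon => by have := Finset.mem_range.1 hr; omega)
  have E2 : ∑ r ∈ range a, restShape ℓ lam (extT hl n lam a U)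
      (cutM ℓ n hl lam a + k) (lastC ℓ hl) r = ∑ r ∈ range a, lam (lastC ℓ hl) r :=
    Finset.sum_congr rfl e2
  rw [E2]
  have e3 : ∀ i ∈ range y.2.1,
      restShape ℓ lam (extT hl n lam a U) (cutM ℓ n hl lam a + k) (lastC ℓ hl) (a + i)
        = restShape 1 (gamma1 ℓ hl lam a) U k 0 i := by
    intro i _
    exact restShape_extT_big_reg hl hU
  have E3 : ∑ i ∈ range y.2.1, restShape ℓ lam (extT hl n lam a U)
      (cutM ℓ n hl lam a + k) (lastC ℓ hl) (a + i)
        = ∑ i ∈ range y.2.1, restShape 1 (gamma1 ℓ hl lam a) U k 0 i :=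
    Finset.sum_congr rfl e3
  rw [E3]
  have e4 : ∀ r ∈ range y.2.1,
      restShape 1 (gamma1 ℓ hl lam a) U k y.1 r = restShape 1 (gamma1 ℓ hl lam a) U k 0 r := by
    intro r _
    rw [hy1]
  have E4 : ∑ r ∈ range y.2.1, restShape 1 (gamma1 ℓ hl lam a) U k y.1 r
      = ∑ r ∈ range y.2.1, restShape 1 (gamma1 ℓ hl lam a) U k 0 r :=
    Finset.sum_congr rfl e4
  rw [E4]
  unfold cutM
  omega

end Cut3

end Paper
end

noncomputable section
open scoped Classical
namespace Paper
open Finset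

section Words

variable {l N : ℕ} {lamf : Fin l → ℕ → ℕ} {U : Node l → ℕ}

lemma row_le (hU : IsStdTab l N lamf U) (c : Fin l) (r : ℕ) {j j' : ℕ} (hj : j ≤ j')
    (hj' : j' < lamf c r) : U (c, r, j) ≤ U (c, r, j') := by
  induction j' with
  | zero => have : j = 0 := by omega
            rw [this]
  | succ j'' ih =>
    rcases Nat.lt_or_ge j (j'' + 1) with h | h
    · have h1 : U (c, r, j) ≤ U (c, r, j'') := ih (by omega) (by omega)
      have h2 : U (c, r, j'') < U (c, r, j'' + 1) := hU.2.2.1 c r j'' hj'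
      omega
    · have : j = j'' + 1 := by omega
      rw [this]

lemma mem_restShape_self (hU : IsStdTab l N lamf U) {k : ℕ} {y : Node l}
    (hy : y ∈ diag l lamf) (hval : U y = k) :
    y ∈ diag l (restShape l lamf U k) := by
  have hsub : range (y.2.2 + 1)
      ⊆ (range (lamf y.1 y.2.1)).filter (fun j => U (y.1, y.2.1, j) ≤ k) := by
    intro j hj
    have hj' : j ≤ y.2.2 := by have := Finset.mem_range.1 hj; omega
    have hy' : y.2.2 < lamf y.1 y.2.1 := hy
    refine Finset.mem_filter.2 ⟨Finset.mem_range.2 (by omega), ?_⟩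
    have h1 : U (y.1, y.2.1, j) ≤ U (y.1, y.2.1, y.2.2) := row_le hU y.1 y.2.1 hj' hy'
    have h2 : U (y.1, y.2.1, y.2.2) = k := hval
    omega
  have hcard := Finset.card_le_card hsub
  rw [Finset.card_range] at hcard
  have hd : y.2.2 < restShape l lamf U k y.1 y.2.1 := by
    unfold restShape
    omega
  exact hd

lemma aEntry_node (hU : IsStdTab l N lamf U) {k : ℕ} {y : Node l}
    (hy : y ∈ diag l lamf) (hval : U y = k) :
    aEntry l N lamf U k = initTab l N (restShape l lamf U k) y := by
  have hex : ∃ x, x ∈ diag l lamf ∧ U x = k := ⟨y, hy, hval⟩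
  unfold aEntry
  rw [dif_pos hex]
  have hch := hex.choose_spec
  have hcy : hex.choose = y := hU.2.1.1.2.1 hch.1 hy (hch.2.trans hval.symm)
  rw [hcy]
  unfold interT
  rw [hval, if_neg (by omega)]
  have : k + 1 - 1 = k := by omega
  rw [this]

lemma aEntry_pos (hU : IsStdTab l N lamf U) {k : ℕ} {y : Node l}
    (hy : y ∈ diag l lamf) (hval : U y = k) :
    1 ≤ aEntry l N lamf U k := by
  rw [aEntry_node hU hy hval]
  exact initTab_pos (mem_restShape_self hU hy hval)

lemma aEntry_no_node (h : ¬ ∃ x, x ∈ diag l lamf ∧ U x = k) :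
    aEntry l N lamf U k = k := by
  unfold aEntry
  rw [dif_neg h]

lemma aEntry_zero (hU : IsStdTab l N lamf U) : aEntry l N lamf U 0 = 0 := by
  apply aEntry_no_node
  rintro ⟨x, hx, hval⟩
  have := (tab_val_mem hU.2.1 hx).1
  omega

lemma wordAt_mem_bounds (hU : IsStdTab l N lamf U) {k r : ℕ} (hk : k ≤ N)
    (hr : r ∈ wordAt l N lamf U k) : 1 ≤ r ∧ r < N := by
  unfold wordAt at hr
  rw [List.mem_range'_1] at hr
  by_cases hex : ∃ x, x ∈ diag l lamf ∧ U x = k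
  · obtain ⟨y, hy, hval⟩ := hex
    have h1 := aEntry_pos hU hy hval
    omega
  · rw [aEntry_no_node hex] at hr
    omega

lemma stdWord_mem_bounds (hU : IsStdTab l N lamf U) :
    ∀ r ∈ stdWord l N lamf U, 1 ≤ r ∧ r < N := by
  intro r hr
  unfold stdWord at hr
  rw [List.mem_flatten] at hr
  obtain ⟨w, hw, hrw⟩ := hr
  rw [List.mem_map] at hw
  obtain ⟨k, hk, hkw⟩ := hw
  rw [List.mem_reverse, List.mem_range] at hk
  rw [← hkw] at hrw
  exact wordAt_mem_bounds hU (by omega) hrw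

end Words

section Cut4

variable {ℓ : ℕ} (hl : 0 < ℓ) {n : ℕ} {lam : Fin ℓ → ℕ → ℕ} {a : ℕ}

lemma aEntry_extT_le (hlam : IsMultipartition ℓ n lam) (ha : lam (lastC ℓ hl) a ≠ 0)
    {U : Node 1 → ℕ} (hU : IsStdTab 1 (n - cutM ℓ n hl lam a) (gamma1 ℓ hl lam a) U)
    {i : ℕ} (hi : i ≤ cutM ℓ n hl lam a) :
    aEntry ℓ n lam (extT hl n lam a U) i = i := by
  by_cases hex : ∃ x, x ∈ diag ℓ lam ∧ extT hl n lam a U x = i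
  · unfold aEntry
    rw [dif_pos hex]
    have hch := hex.choose_spec
    set x0 := hex.choose with hx0
    have hreg : ¬(x0.1 = lastC ℓ hl ∧ a ≤ x0.2.1) := by
      intro hcon
      have := (extT_val_reg hl hlam hU.2.1 hcon hch.1).1
      omega
    have hx0mu : x0 ∈ diag ℓ (muPart ℓ hl lam a) := (mem_diag_mu_iff hl).2 ⟨hch.1, hreg⟩
    unfold interT
    rw [hch.2, if_neg (by omega)]
    have h1 : i + 1 - 1 = i := by omega
    rw [h1]
    rw [restShape_extT_le hl hlam hU.2.1 hi]
    have hval : initTab ℓ (cutM ℓ n hl lam a) (muPart ℓ hl lam a) x0 = i := by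
      rw [← extT_not_region hl (U := U) hreg]
      exact hch.2
    rw [← hval]
    exact initTab_restShape_self (mu_ismulti hl hlam ha) (cutM_le_n hl hlam) hx0mu
  · exact aEntry_no_node hex

lemma aEntry_extT_big (hlam : IsMultipartition ℓ n lam) (ha : lam (lastC ℓ hl) a ≠ 0)
    {U : Node 1 → ℕ} (hU : IsStdTab 1 (n - cutM ℓ n hl lam a) (gamma1 ℓ hl lam a) U)
    {k : ℕ} (hk1 : 1 ≤ k) (hk2 : k ≤ n - cutM ℓ n hl lam a) :
    aEntry ℓ n lam (extT hl n lam a U) (cutM ℓ n hl lam a + k)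
      = cutM ℓ n hl lam a + aEntry 1 (n - cutM ℓ n hl lam a) (gamma1 ℓ hl lam a) U k := by
  obtain ⟨y0, hy0, hval0⟩ := hU.2.1.1.2.2 (Set.mem_Icc.2 ⟨hk1, hk2⟩)
  have hstd := extT_std hl hlam ha hU
  have hphidiag : phiN hl a y0 ∈ diag ℓ lam := (phiN_mem_diag hl).2 hy0
  have hphival : extT hl n lam a U (phiN hl a y0) = cutM ℓ n hl lam a + k := by
    rw [extT_phi hl hU.2.1 hy0, hval0]
    omega
  have hex : ∃ x, x ∈ diag ℓ lam ∧ extT hl n lam a U x = cutM ℓ n hl lam a + k :=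
    ⟨phiN hl a y0, hphidiag, hphival⟩
  rw [aEntry_node hU hy0 hval0]
  unfold aEntry
  rw [dif_pos hex]
  have hch := hex.choose_spec
  have hcy : hex.choose = phiN hl a y0 :=
    hstd.2.1.1.2.1 hch.1 hphidiag (hch.2.trans hphival.symm)
  rw [hcy]
  unfold interT
  rw [hphival, if_neg (by omega)]
  have h1 : cutM ℓ n hl lam a + k + 1 - 1 = cutM ℓ n hl lam a + k := by omega
  rw [h1]
  have hymem : y0 ∈ diag 1 (restShape 1 (gamma1 ℓ hl lam a) U k) :=
    mem_restShape_self hU hy0 hval0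
  rw [initTab_restShape_big_phi hl hlam ha hU.2.1 hymem]
  omega

lemma wordAt_extT_le (hlam : IsMultipartition ℓ n lam) (ha : lam (lastC ℓ hl) a ≠ 0)
    {U : Node 1 → ℕ} (hU : IsStdTab 1 (n - cutM ℓ n hl lam a) (gamma1 ℓ hl lam a) U)
    {i : ℕ} (hi : i ≤ cutM ℓ n hl lam a) :
    wordAt ℓ n lam (extT hl n lam a U) i = [] := by
  unfold wordAt
  rw [aEntry_extT_le hl hlam ha hU hi]
  rw [Nat.sub_self]
  rfl

lemma wordAt_extT_big (hlam : IsMultipartition ℓ n lam) (ha : lam (lastC ℓ hl) a ≠ 0)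
    {U : Node 1 → ℕ} (hU : IsStdTab 1 (n - cutM ℓ n hl lam a) (gamma1 ℓ hl lam a) U)
    {k : ℕ} (hk2 : k ≤ n - cutM ℓ n hl lam a) :
    wordAt ℓ n lam (extT hl n lam a U) (cutM ℓ n hl lam a + k)
      = List.map (fun x => cutM ℓ n hl lam a + x)
          (wordAt 1 (n - cutM ℓ n hl lam a) (gamma1 ℓ hl lam a) U k) := by
  rcases Nat.eq_zero_or_pos k with hk0 | hk1
  · subst hk0
    rw [wordAt_extT_le hl hlam ha hU (by omega)]
    unfold wordAt
    rw [aEntry_zero hU, Nat.sub_self]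
    rfl
  · unfold wordAt
    rw [aEntry_extT_big hl hlam ha hU hk1 hk2]
    rw [Nat.add_sub_add_left]
    rw [List.map_add_range']

lemma stdWord_extT (hlam : IsMultipartition ℓ n lam) (ha : lam (lastC ℓ hl) a ≠ 0)
    {U : Node 1 → ℕ} (hU : IsStdTab 1 (n - cutM ℓ n hl lam a) (gamma1 ℓ hl lam a) U) :
    stdWord ℓ n lam (extT hl n lam a U)
      = List.map (fun x => cutM ℓ n hl lam a + x)
          (stdWord 1 (n - cutM ℓ n hl lam a) (gamma1 ℓ hl lam a) U) := by
  have hmn := cutM_le_n hl (lam := lam) (a := a) hlam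
  unfold stdWord
  rw [show n + 1 = cutM ℓ n hl lam a + (n - cutM ℓ n hl lam a + 1) by omega]
  rw [List.range_add, List.reverse_append, List.map_append, List.flatten_append]
  rw [← List.map_reverse, List.map_map]
  have e1 : List.map (wordAt ℓ n lam (extT hl n lam a U) ∘ (fun x => cutM ℓ n hl lam a + x))
      ((List.range (n - cutM ℓ n hl lam a + 1)).reverse)
      = List.map ((List.map (fun x => cutM ℓ n hl lam a + x))
          ∘ (wordAt 1 (n - cutM ℓ n hl lam a) (gamma1 ℓ hl lam a) U))
          ((List.range (n - cutM ℓ n hl lam a + 1)).reverse) := by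
    apply List.map_congr_left
    intro k hk
    rw [List.mem_reverse, List.mem_range] at hk
    exact wordAt_extT_big hl hlam ha hU (by omega)
  rw [e1]
  have e2 : (List.map (wordAt ℓ n lam (extT hl n lam a U))
      (List.range (cutM ℓ n hl lam a)).reverse).flatten = [] := by
    apply List.flatten_eq_nil_iff.2
    intro w hw
    rw [List.mem_map] at hw
    obtain ⟨i, hi, hiw⟩ := hw
    rw [List.mem_reverse, List.mem_range] at hi
    rw [← hiw]
    exact wordAt_extT_le hl hlam ha hU (by omega)
  rw [e2]
  rw [← List.map_map (g := List.map (fun x => cutM ℓ n hl lam a + x))]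
  rw [← List.map_flatten]
  rw [List.append_nil]

end Cut4

end Paper
end

noncomputable section
open scoped Classical
namespace Paper
open Finset

section Residues

variable (e : ℕ) {ℓ : ℕ} (hl : 0 < ℓ) {n : ℕ} {lam : Fin ℓ → ℕ → ℕ} {a : ℕ}

lemma resAt_witness {l : ℕ} (κ : Fin l → ZMod e) (lamf : Fin l → ℕ → ℕ) (T : Node l → ℕ)
    (hinj : Set.InjOn T (diag l lamf)) {k : ℕ} {x0 : Node l}
    (hx0 : x0 ∈ diag l lamf) (hval : T x0 = k) :
    resAt e κ lamf T k = res e κ x0 := by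
  have hex : ∃ x, x ∈ diag l lamf ∧ T x = k := ⟨x0, hx0, hval⟩
  unfold resAt
  rw [dif_pos hex]
  have hch := hex.choose_spec
  rw [hinj hch.1 hx0 (hch.2.trans hval.symm)]

lemma res_phi (κ : Fin ℓ → ZMod e) (y : Node 1) :
    res e κ (phiN hl a y) = res e (kappa1 e ℓ hl κ a) y := by
  unfold res phiN kappa1 cutRes res
  dsimp only
  push_cast
  ring

lemma phiN_reconstruct {x : Node ℓ} (h1 : x.1 = lastC ℓ hl) (h2 : a ≤ x.2.1) :
    phiN hl a (((0 : Fin 1), x.2.1 - a, x.2.2) : Node 1) = x := by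
  unfold phiN
  obtain ⟨c, r, j⟩ := x
  simp only at h1 h2 ⊢
  rw [h1]
  have h3 : a + (r - a) = r := by omega
  rw [h3]

lemma phiN_injective : Function.Injective (phiN hl a (ℓ := ℓ)) := by
  intro y y' h
  unfold phiN at h
  simp only [Prod.mk.injEq] at h
  obtain ⟨cy, ry, jy⟩ := y
  obtain ⟨cy', ry', jy'⟩ := y'
  simp only at h
  have h1 : cy = cy' := Subsingleton.elim _ _
  have h2 : ry = ry' := by omega
  rw [h1, h2, h.2.2]

lemma resAt_lam_mu (hlam : IsMultipartition ℓ n lam) (κ : Fin ℓ → ZMod e) (ha : lam (lastC ℓ hl) a ≠ 0)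
    {x : ℕ} (hx : x < cutM ℓ n hl lam a) :
    resAt e κ lam (initTab ℓ n lam) (x + 1)
      = resAt e κ (muPart ℓ hl lam a) (initTab ℓ (cutM ℓ n hl lam a) (muPart ℓ hl lam a))
          (x + 1) := by
  have hmu := mu_ismulti hl hlam ha
  have hmem : (x + 1) ∈ Set.Icc 1 (cutM ℓ n hl lam a) := Set.mem_Icc.2 ⟨by omega, by omega⟩
  obtain ⟨x0, hx0, hval0⟩ := initTab_surjOn hmu hmem
  have hnot := ((mem_diag_mu_iff hl).1 hx0).2
  have hx0lam := ((mem_diag_mu_iff hl).1 hx0).1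
  have hvallam : initTab ℓ n lam x0 = x + 1 := by
    rw [initTab_lam_mu hl hlam hnot]
    exact hval0
  rw [resAt_witness e κ lam _ (initTab_injOn hlam) hx0lam hvallam]
  rw [resAt_witness e κ _ _ (initTab_injOn hmu) hx0 hval0]

lemma resAt_lam_gamma (hlam : IsMultipartition ℓ n lam) (κ : Fin ℓ → ZMod e) (ha : lam (lastC ℓ hl) a ≠ 0)
    (hγ : IsMultipartition 1 (n - cutM ℓ n hl lam a) (gamma1 ℓ hl lam a))
    {k : ℕ} (hk1 : 1 ≤ k) (hk2 : k ≤ n - cutM ℓ n hl lam a) :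
    resAt e κ lam (initTab ℓ n lam) (cutM ℓ n hl lam a + k)
      = resAt e (kappa1 e ℓ hl κ a) (gamma1 ℓ hl lam a)
          (initTab 1 (n - cutM ℓ n hl lam a) (gamma1 ℓ hl lam a)) k := by
  obtain ⟨y0, hy0, hval0⟩ := initTab_surjOn hγ (Set.mem_Icc.2 ⟨hk1, hk2⟩)
  have hphidiag : phiN hl a y0 ∈ diag ℓ lam := (phiN_mem_diag hl).2 hy0
  have hphival : initTab ℓ n lam (phiN hl a y0) = cutM ℓ n hl lam a + k := by
    rw [initTab_lam_phi hl hlam hy0, hval0]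
    omega
  rw [resAt_witness e κ lam _ (initTab_injOn hlam) hphidiag hphival]
  rw [resAt_witness e _ _ _ (initTab_injOn hγ) hy0 hval0]
  exact res_phi e hl κ y0

end Residues

section AddSets

variable (e : ℕ) {ℓ : ℕ} (hl : 0 < ℓ) {n : ℕ} {lam : Fin ℓ → ℕ → ℕ} {a : ℕ}
variable (κ : Fin ℓ → ZMod e)

lemma addSet_le (hlam : IsMultipartition ℓ n lam)
    (hγ : IsMultipartition 1 (n - cutM ℓ n hl lam a) (gamma1 ℓ hl lam a)) {k : ℕ} (hk : k ≤ cutM ℓ n hl lam a) :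
    addSet e κ lam (initTab ℓ n lam) k
      = addSet e κ (muPart ℓ hl lam a)
          (initTab ℓ (cutM ℓ n hl lam a) (muPart ℓ hl lam a)) k := by
  have hE := initTab_eq_extT hl hlam hγ
  have hshape : restShape ℓ lam (initTab ℓ n lam) k
      = restShape ℓ (muPart ℓ hl lam a)
          (initTab ℓ (cutM ℓ n hl lam a) (muPart ℓ hl lam a)) k := by
    rw [hE]
    exact restShape_extT_le hl hlam (initTab_std hγ).2.1 hk
  ext x
  unfold addSet
  simp only [Set.mem_setOf_eq]
  rw [hshape]
  constructor
  · rintro ⟨hadd, hcond⟩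
    refine ⟨hadd, ?_⟩
    intro y hy hval
    have hynot := ((mem_diag_mu_iff hl).1 hy).2
    have hylam := ((mem_diag_mu_iff hl).1 hy).1
    exact hcond y hylam (by rw [initTab_lam_mu hl hlam hynot]; exact hval)
  · rintro ⟨hadd, hcond⟩
    refine ⟨hadd, ?_⟩
    intro y hy hval
    have hreg : ¬(y.1 = lastC ℓ hl ∧ a ≤ y.2.1) := by
      intro hcon
      have h1 := (extT_val_reg hl hlam (initTab_std hγ).2.1 hcon hy).1
      rw [← hE] at h1
      omega
    refine hcond y ((mem_diag_mu_iff hl).2 ⟨hy, hreg⟩) ?_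
    rw [← initTab_lam_mu hl hlam hreg]
    exact hval

lemma addSet_big (hlam : IsMultipartition ℓ n lam) (ha : lam (lastC ℓ hl) a ≠ 0)
    (hγ : IsMultipartition 1 (n - cutM ℓ n hl lam a) (gamma1 ℓ hl lam a)) {k : ℕ} (hk1 : 1 ≤ k) (hk2 : k ≤ n - cutM ℓ n hl lam a) :
    addSet e κ lam (initTab ℓ n lam) (cutM ℓ n hl lam a + k)
      = (phiN hl a) '' (addSet e (kappa1 e ℓ hl κ a) (gamma1 ℓ hl lam a)
          (initTab 1 (n - cutM ℓ n hl lam a) (gamma1 ℓ hl lam a)) k) := by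
  have hE := initTab_eq_extT hl hlam hγ
  have hγstd := initTab_std hγ
  obtain ⟨z0, hz0, hval0⟩ := initTab_surjOn hγ (Set.mem_Icc.2 ⟨hk1, hk2⟩)
  set m := cutM ℓ n hl lam a with hm
  set G := initTab 1 (n - cutM ℓ n hl lam a) (gamma1 ℓ hl lam a) with hG
  have hTphi : ∀ w : Node 1, w ∈ diag 1 (gamma1 ℓ hl lam a) →
      initTab ℓ n lam (phiN hl a w) = G w + m := by
    intro w hw
    exact initTab_lam_phi hl hlam hw
  ext x
  unfold addSet
  simp only [Set.mem_image, Set.mem_setOf_eq]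
  constructor
  · rintro ⟨hadd, hcond⟩
    have hz0phi : phiN hl a z0 ∈ diag ℓ lam := (phiN_mem_diag hl).2 hz0
    obtain ⟨hbel, hres⟩ := hcond (phiN hl a z0) hz0phi
      (by rw [hTphi z0 hz0, hval0]; omega)
    -- deduce the position of x
    have hx1 : x.1 = lastC ℓ hl ∧ a + z0.2.1 < x.2.1 := by
      rcases hbel with h | h
      · exfalso
        have h1 : (phiN hl a z0).1 = lastC ℓ hl := rfl
        rw [h1] at h
        exact absurd h (not_lt.2 (le_lastC hl x.1))
      · have h1 : (phiN hl a z0).1 = lastC ℓ hl := rfl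
        have h2 : (phiN hl a z0).2.1 = a + z0.2.1 := rfl
        rw [h1] at h
        rw [h2] at h
        exact ⟨h.1.symm, h.2⟩
    have hax : a ≤ x.2.1 := by omega
    have hxrec : phiN hl a (((0 : Fin 1), x.2.1 - a, x.2.2) : Node 1) = x :=
      phiN_reconstruct hl hx1.1 hax
    set s := x.2.1 - a with hs
    have hs1 : 1 ≤ s := by omega
    refine ⟨(((0 : Fin 1), s, x.2.2) : Node 1), ⟨?_, ?_⟩, hxrec⟩
    · -- addability
      obtain ⟨ha1, ha2⟩ := hadd
      constructor
      · show x.2.2 = restShape 1 (gamma1 ℓ hl lam a) G k 0 s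
        rw [← restShape_extT_big_reg hl hγstd.2.1 (k := k) (s := s)]
        rw [← hE]
        have : a + s = x.2.1 := by omega
        rw [this, ← hx1.1]
        exact ha1
      · right
        show restShape 1 (gamma1 ℓ hl lam a) G k 0 s
            < restShape 1 (gamma1 ℓ hl lam a) G k 0 (s - 1)
        rcases ha2 with h | h
        · omega
        · rw [← restShape_extT_big_reg hl hγstd.2.1 (k := k) (s := s)]
          rw [← restShape_extT_big_reg hl hγstd.2.1 (k := k) (s := s - 1)]
          rw [← hE]
          have e1 : a + s = x.2.1 := by omega
          have e2 : a + (s - 1) = x.2.1 - 1 := by omega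
          rw [e1, e2, ← hx1.1]
          exact h
    · -- the condition
      intro w hw hwval
      have hwphi : phiN hl a w ∈ diag ℓ lam := (phiN_mem_diag hl).2 hw
      obtain ⟨hbelw, hresw⟩ := hcond (phiN hl a w) hwphi
        (by rw [hTphi w hw, hwval]; omega)
      constructor
      · right
        constructor
        · exact Subsingleton.elim _ _
        · show w.2.1 < s
          rcases hbelw with h | h
          · exfalso
            have h1 : (phiN hl a w).1 = lastC ℓ hl := rfl
            rw [h1] at h
            exact absurd h (not_lt.2 (le_lastC hl x.1))
          · have h2 : (phiN hl a w).2.1 = a + w.2.1 := rfl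
            rw [h2] at h
            omega
      · have r1 : res e (kappa1 e ℓ hl κ a) (((0 : Fin 1), s, x.2.2) : Node 1)
            = res e κ x := by
          rw [← res_phi e hl κ]
          rw [hxrec]
        have r2 : res e κ (phiN hl a w) = res e (kappa1 e ℓ hl κ a) w := res_phi e hl κ w
        rw [r1, ← r2]
        exact hresw
  · rintro ⟨z, ⟨hzadd, hzcond⟩, rfl⟩
    have hs1 : 1 ≤ z.2.1 := by
      obtain ⟨hbel, -⟩ := hzcond z0 hz0 hval0
      rcases hbel with h | h
      · exfalso
        have : z0.1 = z.1 := Subsingleton.elim _ _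
        rw [this] at h
        exact lt_irrefl _ h
      · omega
    have hz1 : z.1 = (0 : Fin 1) := Subsingleton.elim _ _
    constructor
    · -- addability of phiN z
      obtain ⟨ha1, ha2⟩ := hzadd
      rw [hz1] at ha1 ha2
      constructor
      · show (phiN hl a z).2.2
          = restShape ℓ lam (initTab ℓ n lam) (m + k) (phiN hl a z).1 (phiN hl a z).2.1
        have h1 : (phiN hl a z).1 = lastC ℓ hl := rfl
        have h2 : (phiN hl a z).2.1 = a + z.2.1 := rfl
        have h3 : (phiN hl a z).2.2 = z.2.2 := rfl
        rw [h1, h2, h3, hE, restShape_extT_big_reg hl hγstd.2.1]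
        exact ha1
      · right
        have h2 : (phiN hl a z).2.1 = a + z.2.1 := rfl
        have h1 : (phiN hl a z).1 = lastC ℓ hl := rfl
        rw [h1, h2, hE]
        have e2 : a + z.2.1 - 1 = a + (z.2.1 - 1) := by omega
        rw [e2, restShape_extT_big_reg hl hγstd.2.1, restShape_extT_big_reg hl hγstd.2.1]
        rcases ha2 with h | h
        · omega
        · exact h
    · intro y hy hval
      have hreg : y.1 = lastC ℓ hl ∧ a ≤ y.2.1 := by
        by_contra hcon
        have hymu : y ∈ diag ℓ (muPart ℓ hl lam a) := (mem_diag_mu_iff hl).2 ⟨hy, hcon⟩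
        have h1 := (extT_val_mu hl hlam ha
          (U := G) hymu).2
        rw [← hE] at h1
        omega
      have hyw : (((0 : Fin 1), y.2.1 - a, y.2.2) : Node 1) ∈ diag 1 (gamma1 ℓ hl lam a) :=
        (gammaNode_mem hl hreg).1 hy
      have hyrec : phiN hl a (((0 : Fin 1), y.2.1 - a, y.2.2) : Node 1) = y :=
        phiN_reconstruct hl hreg.1 hreg.2
      have hwval : G (((0 : Fin 1), y.2.1 - a, y.2.2) : Node 1) = k := by
        have := hTphi _ hyw
        rw [hyrec, hval] at this
        omega
      obtain ⟨hbelw, hresw⟩ := hzcond _ hyw hwval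
      have hwlt : y.2.1 - a < z.2.1 := by
        rcases hbelw with h | h
        · exfalso
          have : (((0 : Fin 1), y.2.1 - a, y.2.2) : Node 1).1 = z.1 := Subsingleton.elim _ _
          rw [this] at h
          exact lt_irrefl _ h
        · exact h.2
      constructor
      · right
        constructor
        · rw [hreg.1]; rfl
        · show y.2.1 < (phiN hl a z).2.1
          have h2 : (phiN hl a z).2.1 = a + z.2.1 := rfl
          rw [h2]
          omega
      · rw [res_phi e hl κ z, ← hyrec, res_phi e hl κ]
        exact hresw

lemma addCount_le (hlam : IsMultipartition ℓ n lam)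
    (hγ : IsMultipartition 1 (n - cutM ℓ n hl lam a) (gamma1 ℓ hl lam a)) {k : ℕ} (hk : k ≤ cutM ℓ n hl lam a) :
    addCount e κ lam (initTab ℓ n lam) k
      = addCount e κ (muPart ℓ hl lam a)
          (initTab ℓ (cutM ℓ n hl lam a) (muPart ℓ hl lam a)) k := by
  unfold addCount
  rw [addSet_le e hl κ hlam hγ hk]

lemma addCount_big (hlam : IsMultipartition ℓ n lam) (ha : lam (lastC ℓ hl) a ≠ 0)
    (hγ : IsMultipartition 1 (n - cutM ℓ n hl lam a) (gamma1 ℓ hl lam a)) {k : ℕ} (hk1 : 1 ≤ k) (hk2 : k ≤ n - cutM ℓ n hl lam a) :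
    addCount e κ lam (initTab ℓ n lam) (cutM ℓ n hl lam a + k)
      = addCount e (kappa1 e ℓ hl κ a) (gamma1 ℓ hl lam a)
          (initTab 1 (n - cutM ℓ n hl lam a) (gamma1 ℓ hl lam a)) k := by
  unfold addCount
  rw [addSet_big e hl κ hlam ha hγ hk1 hk2]
  exact Set.ncard_image_of_injective _ (phiN_injective hl)

end AddSets

end Paper
end

noncomputable section
open scoped Classical
namespace Paper
open Finset

section Algebra

variable {e n : ℕ} {Λ : ZMod e →₀ ℕ}

lemma cy_comm (r s : Fin n) : Commute (cy e n Λ r) (cy e n Λ s) := by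
  unfold Commute SemiconjBy cy ay
  rw [← map_mul, ← map_mul, ← map_mul, ← map_mul]
  exact congrArg _ (RingQuot.mkRingHom_rel (Rel.dot_dot r s))

lemma cpsi_cy_comm (r : Fin (n - 1)) (k : Fin n) (h1 : k ≠ lo r) (h2 : k ≠ hi r) :
    Commute (cpsi e n Λ r) (cy e n Λ k) := by
  unfold Commute SemiconjBy cpsi cy apsi ay
  rw [← map_mul, ← map_mul, ← map_mul, ← map_mul]
  exact congrArg _ (RingQuot.mkRingHom_rel (Rel.cross_dot r k h1 h2))

lemma theta_fe (m : ℕ) (j : Fin m → ZMod e) (i : Fin (n - m) → ZMod e) :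
    thetaFree e n Λ m j (fe i) = ce e n Λ (fun x : Fin n =>
      if hx : x.1 < m then j ⟨x.1, hx⟩ else i ⟨x.1 - m, by have := x.2; omega⟩) := by
  unfold thetaFree fe
  rw [FreeAlgebra.lift_ι_apply]

lemma theta_fy (m : ℕ) (j : Fin m → ZMod e) (r : Fin (n - m)) :
    thetaFree e n Λ m j (fy r)
      = if hr : r.1 + m < n then cy e n Λ ⟨r.1 + m, hr⟩ else 1 := by
  unfold thetaFree fy
  rw [FreeAlgebra.lift_ι_apply]

lemma theta_fpsi (m : ℕ) (j : Fin m → ZMod e) (r : Fin (n - m - 1)) :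
    thetaFree e n Λ m j (fpsi r)
      = if hr : r.1 + m < n - 1 then cpsi e n Λ ⟨r.1 + m, hr⟩ else 1 := by
  unfold thetaFree fpsi
  rw [FreeAlgebra.lift_ι_apply]

lemma theta_fpsiOf (m : ℕ) (j : Fin m → ZMod e) (hmn : m ≤ n) {r : ℕ}
    (h1 : 1 ≤ r) (h2 : r < n - m) :
    thetaFree e n Λ m j (fpsiOf e (n - m) r) = cpsiOf e n Λ (m + r) := by
  unfold fpsiOf cpsiOf
  rw [dif_pos ⟨h1, h2⟩, dif_pos (show 1 ≤ m + r ∧ m + r < n by omega)]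
  rw [theta_fpsi]
  rw [dif_pos (show (r - 1) + m < n - 1 by omega)]
  congr 1
  apply Fin.ext
  show (r - 1) + m = m + r - 1
  omega

lemma theta_fPsiWord (m : ℕ) (j : Fin m → ZMod e) (hmn : m ≤ n) {L : List ℕ}
    (hL : ∀ r ∈ L, 1 ≤ r ∧ r < n - m) :
    thetaFree e n Λ m j (fPsiWord e (n - m) L)
      = psiWord e n Λ (List.map (fun x => m + x) L) := by
  induction L with
  | nil =>
    unfold fPsiWord psiWord
    simp
  | cons rr t ih =>
    unfold fPsiWord psiWord at *
    simp only [List.map_cons, List.prod_cons, map_mul]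
    rw [theta_fpsiOf m j hmn (hL rr (List.mem_cons_self (a := rr) (l := t))).1
      (hL rr (List.mem_cons_self (a := rr) (l := t))).2]
    rw [ih (fun r hr => hL r (List.mem_cons_of_mem rr hr))]

lemma theta_fyEl (m : ℕ) (j : Fin m → ZMod e) {l' : ℕ} (κ' : Fin l' → ZMod e)
    (lam' : Fin l' → ℕ → ℕ) :
    thetaFree e n Λ m j (fyEl e (n - m) κ' lam' (n - m))
      = ((List.range (n - m)).map (fun jj =>
          if h : jj + m < n then cy e n Λ ⟨jj + m, h⟩
            ^ addCount e κ' lam' (initTab l' (n - m) lam') (jj + 1) else 1)).prod := by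
  unfold fyEl
  rw [map_list_prod]
  rw [List.map_map]
  congr 1
  apply List.map_congr_left
  intro jj hj
  rw [List.mem_range] at hj
  simp only [Function.comp]
  rw [dif_pos hj, map_pow, theta_fy]
  rw [dif_pos (show jj + m < n by omega), dif_pos (show jj + m < n by omega)]

lemma cpsiOf_commute_cy {r : ℕ} (hr : m + 1 ≤ r) {k : Fin n} (hk : k.1 < m) :
    Commute (cpsiOf e n Λ r) (cy e n Λ k) := by
  unfold cpsiOf
  by_cases h : 1 ≤ r ∧ r < n
  · rw [dif_pos h]
    apply cpsi_cy_comm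
    · exact Fin.ne_of_val_ne (by show k.1 ≠ r - 1; omega)
    · exact Fin.ne_of_val_ne (by show k.1 ≠ (r - 1) + 1; omega)
  · rw [dif_neg h]
    exact Commute.one_left _

lemma psiWord_commute_yEl {ℓ' : ℕ} (κ : Fin ℓ' → ZMod e) (lamf : Fin ℓ' → ℕ → ℕ)
    {mm : ℕ} (hm : mm ≤ m) {L : List ℕ} (hL : ∀ r ∈ L, m + 1 ≤ r) :
    Commute (psiWord e n Λ L) (yEl e n Λ κ lamf mm) := by
  unfold psiWord
  apply Commute.list_prod_left
  intro x hx
  rw [List.mem_map] at hx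
  obtain ⟨r, hrL, hrx⟩ := hx
  rw [← hrx]
  unfold yEl
  apply Commute.list_prod_right
  intro y hy
  rw [List.mem_map] at hy
  obtain ⟨jj, hjj, hjy⟩ := hy
  rw [List.mem_range] at hjj
  rw [← hjy]
  by_cases hjn : jj < n
  · rw [dif_pos hjn]
    exact (cpsiOf_commute_cy (hL r hrL) (show (⟨jj, hjn⟩ : Fin n).1 < m by
      show jj < m; omega)).pow_right _
  · rw [dif_neg hjn]
    exact Commute.one_right _

lemma cyprod_commute {L1 L2 : List (CKLR e n Λ)}
    (h1 : ∀ x ∈ L1, x = 1 ∨ ∃ (r : Fin n) (A : ℕ), x = cy e n Λ r ^ A)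
    (h2 : ∀ x ∈ L2, x = 1 ∨ ∃ (r : Fin n) (A : ℕ), x = cy e n Λ r ^ A) :
    Commute L1.prod L2.prod := by
  apply Commute.list_prod_left
  intro x hx
  apply Commute.list_prod_right
  intro y hy
  rcases h1 x hx with hx' | ⟨r, A, hx'⟩
  · rw [hx']
    exact Commute.one_left _
  · rcases h2 y hy with hy' | ⟨s, B, hy'⟩
    · rw [hy']
      exact Commute.one_right _
    · rw [hx', hy']
      exact (cy_comm r s).pow_pow A B

end Algebra

end Paper
end

noncomputable section
open scoped Classical
namespace Paper
open Finset

section Split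

variable (e : ℕ) {ℓ : ℕ} (hl : 0 < ℓ) {n : ℕ} {lam : Fin ℓ → ℕ → ℕ} {a : ℕ}
variable (Λ : ZMod e →₀ ℕ) (κ : Fin ℓ → ZMod e)

lemma yEl_split (hlam : IsMultipartition ℓ n lam) (ha : lam (lastC ℓ hl) a ≠ 0)
    (hγ : IsMultipartition 1 (n - cutM ℓ n hl lam a) (gamma1 ℓ hl lam a)) :
    yEl e n Λ κ lam n
      = yEl e n Λ κ (muPart ℓ hl lam a) (cutM ℓ n hl lam a)
        * ((List.range (n - cutM ℓ n hl lam a)).map (fun jj =>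
            if h : jj + cutM ℓ n hl lam a < n then
              cy e n Λ ⟨jj + cutM ℓ n hl lam a, h⟩
                ^ addCount e (kappa1 e ℓ hl κ a) (gamma1 ℓ hl lam a)
                    (initTab 1 (n - cutM ℓ n hl lam a) (gamma1 ℓ hl lam a)) (jj + 1)
            else 1)).prod := by
  have hmn := cutM_le_n hl (lam := lam) (a := a) hlam
  unfold yEl
  have hsplit : List.range n = List.range (cutM ℓ n hl lam a)
      ++ List.map (fun x => cutM ℓ n hl lam a + x) (List.range (n - cutM ℓ n hl lam a)) := by
    rw [← List.range_add]
    congr 1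
    omega
  rw [hsplit, List.map_append, List.prod_append]
  congr 1
  · congr 1
    apply List.map_congr_left
    intro jj hjj
    rw [List.mem_range] at hjj
    rw [dif_pos (show jj < n by omega), dif_pos (show jj < n by omega)]
    congr 1
    exact addCount_le e hl κ hlam hγ (by omega)
  · rw [List.map_map]
    congr 1
    apply List.map_congr_left
    intro jj hjj
    rw [List.mem_range] at hjj
    simp only [Function.comp]
    rw [dif_pos (show cutM ℓ n hl lam a + jj < n by omega),
      dif_pos (show jj + cutM ℓ n hl lam a < n by omega)]
    have hbase : (⟨cutM ℓ n hl lam a + jj, by omega⟩ : Fin n)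
        = ⟨jj + cutM ℓ n hl lam a, by omega⟩ := Fin.ext (by
      show cutM ℓ n hl lam a + jj = jj + cutM ℓ n hl lam a
      omega)
    rw [hbase]
    congr 1
    have he : cutM ℓ n hl lam a + jj + 1 = cutM ℓ n hl lam a + (jj + 1) := by omega
    rw [he]
    exact addCount_big e hl κ hlam ha hγ (by omega) (by omega)

lemma mul_rearrange {R : Type*} [Ring R] (A B C D Y yy : R)
    (h1 : D * yy = yy * D) (h2 : C * yy = yy * C) (h3 : Y = yy * C) :
    A * B * C * D * yy = A * B * Y * D := by
  rw [h3, mul_assoc (A * B * C) D yy, h1, ← mul_assoc (A * B * C) yy D,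
    mul_assoc (A * B) C yy, h2, ← mul_assoc (A * B) yy C]

end Split

end Paper
end

namespace Paper

/-!
STATEMENT 16: let `λ` be a multipartition of `n`, `μ` its cut part at the cut
`m = cutM` (with cut row `a` of the last component) and `γ` the remaining part, a
partition of `n - m` with level-1 multicharge given by the cut residue.  If `u, v` are
standard `γ`-tableaux, then there are standard `λ`-tableaux `u̇, v̇` with
`θ̂_{i_μ}(ψ̂_{uv}) · y_μ = ψ_{u̇ v̇}` in `R^Λ_n`.
-/
theorem statement16 (e n : ℕ) (he : e ≠ 1) (Λ : ZMod e →₀ ℕ) (ℓ : ℕ)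
    (hlev : Λ.sum (fun _ m => m) = ℓ) (κ : Fin ℓ → ZMod e)
    (hκ : ∀ i : ZMod e, Λ i = (Finset.univ.filter fun c : Fin ℓ => κ c = i).card)
    (hl : 0 < ℓ) (lam : Fin ℓ → ℕ → ℕ) (hlam : IsMultipartition ℓ n lam)
    (a : ℕ) (ha : lam (lastC ℓ hl) a ≠ 0)
    (U V : Node 1 → ℕ)
    (hU : IsStdTab 1 (n - cutM ℓ n hl lam a) (gamma1 ℓ hl lam a) U)
    (hV : IsStdTab 1 (n - cutM ℓ n hl lam a) (gamma1 ℓ hl lam a) V) :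
    ∃ Ud Vd : Node ℓ → ℕ, IsStdTab ℓ n lam Ud ∧ IsStdTab ℓ n lam Vd ∧
      thetaFree e n Λ (cutM ℓ n hl lam a)
          (resSeqT e (cutM ℓ n hl lam a) κ (muPart ℓ hl lam a)
            (initTab ℓ (cutM ℓ n hl lam a) (muPart ℓ hl lam a)))
          (fPsiHat e (n - cutM ℓ n hl lam a) (kappa1 e ℓ hl κ a) (gamma1 ℓ hl lam a) U V) *
        yEl e n Λ κ (muPart ℓ hl lam a) (cutM ℓ n hl lam a)
      = psiST e n Λ κ lam Ud Vd := by
  have hγ : IsMultipartition 1 (n - cutM ℓ n hl lam a) (gamma1 ℓ hl lam a) := hU.1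
  have hmn := cutM_le_n hl (lam := lam) (a := a) hlam
  refine ⟨extT hl n lam a U, extT hl n lam a V,
    extT_std hl hlam ha hU, extT_std hl hlam ha hV, ?_⟩
  unfold fPsiHat
  rw [map_mul, map_mul, map_mul]
  rw [theta_fPsiWord _ _ hmn (fun r hr => stdWord_mem_bounds hU r (List.mem_reverse.1 hr))]
  rw [theta_fPsiWord _ _ hmn (stdWord_mem_bounds hV)]
  rw [List.map_reverse]
  rw [← stdWord_extT hl hlam ha hU, ← stdWord_extT hl hlam ha hV]
  rw [theta_fe]
  have hce : (fun x : Fin n => if hx : x.1 < cutM ℓ n hl lam a then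
      resSeqT e (cutM ℓ n hl lam a) κ (muPart ℓ hl lam a)
        (initTab ℓ (cutM ℓ n hl lam a) (muPart ℓ hl lam a)) ⟨x.1, hx⟩
      else (fun k : Fin (n - cutM ℓ n hl lam a) =>
        resAt e (kappa1 e ℓ hl κ a) (gamma1 ℓ hl lam a)
          (initTab 1 (n - cutM ℓ n hl lam a) (gamma1 ℓ hl lam a)) (k.1 + 1))
          ⟨x.1 - cutM ℓ n hl lam a, by have := x.2; omega⟩)
      = resSeqT e n κ lam (initTab ℓ n lam) := by
    funext x
    by_cases hx : x.1 < cutM ℓ n hl lam a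
    · rw [dif_pos hx]
      show resAt e κ (muPart ℓ hl lam a)
          (initTab ℓ (cutM ℓ n hl lam a) (muPart ℓ hl lam a)) (x.1 + 1)
        = resAt e κ lam (initTab ℓ n lam) (x.1 + 1)
      exact (resAt_lam_mu e hl hlam κ ha hx).symm
    · rw [dif_neg hx]
      show resAt e (kappa1 e ℓ hl κ a) (gamma1 ℓ hl lam a)
          (initTab 1 (n - cutM ℓ n hl lam a) (gamma1 ℓ hl lam a))
          ((x.1 - cutM ℓ n hl lam a) + 1)
        = resAt e κ lam (initTab ℓ n lam) (x.1 + 1)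
      have h2 := resAt_lam_gamma e hl hlam κ ha hγ
        (k := x.1 - cutM ℓ n hl lam a + 1) (by omega) (by have := x.2; omega)
      rw [show cutM ℓ n hl lam a + (x.1 - cutM ℓ n hl lam a + 1) = x.1 + 1 by
        have := x.2; omega] at h2
      exact h2.symm
  rw [hce]
  rw [theta_fyEl]
  have hc1 : psiWord e n Λ (stdWord ℓ n lam (extT hl n lam a V))
      * yEl e n Λ κ (muPart ℓ hl lam a) (cutM ℓ n hl lam a)
      = yEl e n Λ κ (muPart ℓ hl lam a) (cutM ℓ n hl lam a)
        * psiWord e n Λ (stdWord ℓ n lam (extT hl n lam a V)) := by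
    apply Commute.eq
    apply psiWord_commute_yEl κ (muPart ℓ hl lam a) (le_refl (cutM ℓ n hl lam a))
    intro r hr
    rw [stdWord_extT hl hlam ha hV, List.mem_map] at hr
    obtain ⟨r0, hr0, hrr⟩ := hr
    have := (stdWord_mem_bounds hV r0 hr0).1
    omega
  have hc2 : ((List.range (n - cutM ℓ n hl lam a)).map (fun jj =>
        if h : jj + cutM ℓ n hl lam a < n then
          cy e n Λ ⟨jj + cutM ℓ n hl lam a, h⟩
            ^ addCount e (kappa1 e ℓ hl κ a) (gamma1 ℓ hl lam a)
                (initTab 1 (n - cutM ℓ n hl lam a) (gamma1 ℓ hl lam a)) (jj + 1)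
        else 1)).prod
      * yEl e n Λ κ (muPart ℓ hl lam a) (cutM ℓ n hl lam a)
      = yEl e n Λ κ (muPart ℓ hl lam a) (cutM ℓ n hl lam a)
        * ((List.range (n - cutM ℓ n hl lam a)).map (fun jj =>
            if h : jj + cutM ℓ n hl lam a < n then
              cy e n Λ ⟨jj + cutM ℓ n hl lam a, h⟩
                ^ addCount e (kappa1 e ℓ hl κ a) (gamma1 ℓ hl lam a)
                    (initTab 1 (n - cutM ℓ n hl lam a) (gamma1 ℓ hl lam a)) (jj + 1)
            else 1)).prod := by
    apply Commute.eq
    unfold yEl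
    apply cyprod_commute
    · intro x hx
      rw [List.mem_map] at hx
      obtain ⟨jj, hjj, hjx⟩ := hx
      by_cases h : jj + cutM ℓ n hl lam a < n
      · rw [dif_pos h] at hjx
        exact Or.inr ⟨_, _, hjx.symm⟩
      · rw [dif_neg h] at hjx
        exact Or.inl hjx.symm
    · intro x hx
      rw [List.mem_map] at hx
      obtain ⟨jj, hjj, hjx⟩ := hx
      by_cases h : jj < n
      · rw [dif_pos h] at hjx
        exact Or.inr ⟨_, _, hjx.symm⟩
      · rw [dif_neg h] at hjx
        exact Or.inl hjx.symm
  unfold psiST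
  exact mul_rearrange (R := CKLR e n Λ) _ _ _ _ _ _ hc1 hc2 (yEl_split e hl Λ κ hlam ha hγ)

end Paper
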